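/- arXiv:1810.09175 — 3 statements merged into one kernel-verified Lean document; each statement's English description precedes it below -/
import Mathlib

section
/- Let p be a prime and let C be a linearly closed clonoid on Z_p. Then there exists a subset T of P := {x_1x_2⋯x_i : i ∈ ℕ} ∪ {1} such that C is the linearly closed clonoid on Z_p generated by the operations induced by the polynomials in T (each f ∈ T taken in arity max(1, largest index of a variable occurring in f)). -/
/-- A finitary operation on `A`: an element of arity `n + 1` (so every arity is `≥ 1`). -/
abbrev Ops (A : Type) := Σ n : ℕ, ((Fin (n + 1) → A) → A)

/-- The product `E·F` of two sets of finitary operations: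
all compositions `f ∘ (g₁, …, gₙ)` with `f ∈ E` and all `gᵢ ∈ F` of a common arity. -/
def OpProd {A : Type} (E F : Set (Ops A)) : Set (Ops A) :=
  { h | ∃ (n m : ℕ) (f : (Fin (n + 1) → A) → A) (g : Fin (n + 1) → (Fin (m + 1) → A) → A),
      (⟨n, f⟩ : Ops A) ∈ E ∧ (∀ i, (⟨m, g i⟩ : Ops A) ∈ F) ∧
      h = ⟨m, fun x => f (fun i => g i x)⟩ }

/-- The set `Lin(Z_p)` of linear operations `(x₁, …, xₙ) ↦ Σ aᵢ xᵢ` on `ZMod p`. -/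
def LinOps (p : ℕ) : Set (Ops (ZMod p)) :=
  { h | ∃ (n : ℕ) (a : Fin (n + 1) → ZMod p), h = ⟨n, fun x => ∑ i, a i * x i⟩ }

/-- A linearly closed clonoid on `ZMod p`. -/
def IsLCC (p : ℕ) (C : Set (Ops (ZMod p))) : Prop :=
  C.Nonempty ∧ OpProd (LinOps p) C ⊆ C ∧ OpProd C (LinOps p) ⊆ C

/-- The sum `D₁ + D₂` of two sets of operations on `ZMod p`. -/
def LCCsum (p : ℕ) (D₁ D₂ : Set (Ops (ZMod p))) : Set (Ops (ZMod p)) :=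
  { h | ∃ (n : ℕ) (f g : (Fin (n + 1) → ZMod p) → ZMod p),
      (⟨n, f⟩ : Ops (ZMod p)) ∈ D₁ ∧ (⟨n, g⟩ : Ops (ZMod p)) ∈ D₂ ∧
      h = ⟨n, fun x => f x + g x⟩ }

/-- The linearly closed clonoid on `ZMod p` generated by a set `F` of operations. -/
def genLC (p : ℕ) (F : Set (Ops (ZMod p))) : Set (Ops (ZMod p)) :=
  ⋂₀ { C | IsLCC p C ∧ F ⊆ C }

/-- A finitely generated linearly closed clonoid on `ZMod p`. -/
def FinGenLCC (p : ℕ) (C : Set (Ops (ZMod p))) : Prop :=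
  ∃ F : Set (Ops (ZMod p)), F.Finite ∧ C = genLC p F

/-- A `p`-minor subset of `ℕ`. -/
def IsPMinor (p : ℕ) (M : Set ℕ) : Prop :=
  ∀ n ∈ M, n > p - 1 → n - (p - 1) ∈ M

/-- A reduced polynomial: every variable exponent is at most `p - 1`. -/
def IsReducedPoly (p : ℕ) (f : MvPolynomial ℕ (ZMod p)) : Prop :=
  ∀ d ∈ f.support, ∀ i, d i ≤ p - 1

/-- The `(n+1)`-ary operation on `ZMod p` induced by a polynomial
(meaningful when all variables of `f` have index `< n + 1`). -/
noncomputable def inducedOp (p n : ℕ) (f : MvPolynomial ℕ (ZMod p)) : (Fin (n + 1) → ZMod p) → ZMod p :=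
  fun x => MvPolynomial.eval (fun i => if h : i < n + 1 then x ⟨i, h⟩ else 0) f

/-- `𝒞(M)`: all constant-zero operations together with all operations induced by a nonzero
reduced polynomial each of whose monomials has total degree in `M`. -/
def CM (p : ℕ) (M : Set ℕ) : Set (Ops (ZMod p)) :=
  { h | ∃ n : ℕ, h = ⟨n, fun _ => 0⟩ } ∪
  { h | ∃ (n : ℕ) (f : MvPolynomial ℕ (ZMod p)), f ≠ 0 ∧ IsReducedPoly p f ∧
      (∀ i ∈ f.vars, i < n + 1) ∧ (∀ d ∈ f.support, (d.sum fun _ e => e) ∈ M) ∧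
      h = ⟨n, inducedOp p n f⟩ }

/-- `𝒫(M)`: polynomials each of whose monomials has total degree in `M` (this includes `0`). -/
def PM (p : ℕ) (M : Set ℕ) : Set (MvPolynomial ℕ (ZMod p)) :=
  { f | ∀ d ∈ f.support, (d.sum fun _ e => e) ∈ M }

/-- The set `L` of linear polynomials `Σ aᵢ xᵢ`. -/
def LinPoly (p : ℕ) : Set (MvPolynomial ℕ (ZMod p)) :=
  { f | ∃ (s : Finset ℕ) (a : ℕ → ZMod p),
      f = ∑ i ∈ s, MvPolynomial.C (a i) * MvPolynomial.X i }

/-- The product `A·B` of two sets of polynomials: substitute members of `B` for the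
variables of a member of `A` (regarded as `n`-ary). -/
def PolyProd (p : ℕ) (A B : Set (MvPolynomial ℕ (ZMod p))) :
    Set (MvPolynomial ℕ (ZMod p)) :=
  { h | ∃ (n : ℕ) (f : MvPolynomial ℕ (ZMod p)) (g : ℕ → MvPolynomial ℕ (ZMod p)),
      f ∈ A ∧ (∀ i ∈ f.vars, i < n) ∧ (∀ i < n, g i ∈ B) ∧ h = MvPolynomial.aeval g f }

/-- A polynomial linearly closed clonoid. -/
def IsPLC (p : ℕ) (C : Set (MvPolynomial ℕ (ZMod p))) : Prop :=
  C.Nonempty ∧ PolyProd p (LinPoly p) C ⊆ C ∧ PolyProd p C (LinPoly p) ⊆ C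

/-- The polynomial linearly closed clonoid generated by `F`. -/
def genPLC (p : ℕ) (F : Set (MvPolynomial ℕ (ZMod p))) : Set (MvPolynomial ℕ (ZMod p)) :=
  ⋂₀ { C | IsPLC p C ∧ F ⊆ C }

/-- A clone on `A`: contains all projections and is closed under composition. -/
def IsClone {A : Type} (C : Set (Ops A)) : Prop :=
  (∀ (n : ℕ) (j : Fin (n + 1)), (⟨n, fun x => x j⟩ : Ops A) ∈ C) ∧ OpProd C C ⊆ C

/-- The clone generated by a set of operations. -/
def cloneGen {A : Type} (F : Set (Ops A)) : Set (Ops A) :=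
  ⋂₀ { C | IsClone C ∧ F ⊆ C }

/-- A finitely generated clone. -/
def FinGenClone {A : Type} (C : Set (Ops A)) : Prop :=
  ∃ F : Set (Ops A), F.Finite ∧ C = cloneGen F

/-- The binary addition operation, as a finitary operation. -/
def plusOp (A : Type) [Add A] : Ops A := ⟨1, fun x => x 0 + x 1⟩

/-- The set of all projections. -/
def ProjOps (A : Type) : Set (Ops A) :=
  { h | ∃ (n : ℕ) (j : Fin (n + 1)), h = ⟨n, fun x => x j⟩ }

/-- A linearly closed iterative algebra on `ZMod p`. -/
def IsLCIA (p : ℕ) (C : Set (Ops (ZMod p))) : Prop :=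
  IsLCC p C ∧ OpProd C (C ∪ ProjOps (ZMod p)) ⊆ C

/-- The clone `Aff(Z_p)` of affine operations `(x₁, …, xₙ) ↦ c + Σ aᵢ xᵢ`. -/
def AffOps (p : ℕ) : Set (Ops (ZMod p)) :=
  { h | ∃ (n : ℕ) (c : ZMod p) (a : Fin (n + 1) → ZMod p),
      h = ⟨n, fun x => c + ∑ i, a i * x i⟩ }

/-- An operation preserves an automorphism `π` of `(ZMod p, +)`. -/
def PreservesAut {p : ℕ} (h : Ops (ZMod p)) (π : AddAut (ZMod p)) : Prop :=
  ∀ x : Fin (h.1 + 1) → ZMod p, h.2 (fun i => π (x i)) = π (h.2 x)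

/-- An operation preserves the unary relation `{0}`. -/
def Preserves0 {p : ℕ} (h : Ops (ZMod p)) : Prop :=
  h.2 (fun _ => 0) = 0

/-- The embedding `φ` of linearly closed clonoids on `ZMod p` into sets of operations
on `ZMod p × ZMod p`. -/
def phiMap (p : ℕ) (C : Set (Ops (ZMod p))) : Set (Ops (ZMod p × ZMod p)) :=
  { h | ∃ (n : ℕ) (l₁ l₂ f : (Fin (n + 1) → ZMod p) → ZMod p),
      (⟨n, l₁⟩ : Ops (ZMod p)) ∈ LinOps p ∧ (⟨n, l₂⟩ : Ops (ZMod p)) ∈ LinOps p ∧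
      (⟨n, f⟩ : Ops (ZMod p)) ∈ C ∧
      h = ⟨n, fun x => (l₁ (fun i => (x i).1) + f (fun i => (x i).2),
                        l₂ (fun i => (x i).2))⟩ }


namespace S11

noncomputable section
variable {p : ℕ} [hp : Fact p.Prime]

/-! ### Vandermonde interpolation over `ZMod p` -/

def vmap (p : ℕ) : Fin p → ZMod p := fun i => ((i : ℕ) : ZMod p)

lemma vmap_bij : Function.Bijective (vmap p) := by
  haveI : NeZero p := ⟨hp.out.pos.ne'⟩
  refine (Fintype.bijective_iff_injective_and_card _).mpr ⟨?_, by simp [ZMod.card]⟩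
  intro i j hij
  have := congrArg ZMod.val hij
  rwa [vmap, vmap, ZMod.val_cast_of_lt i.isLt, ZMod.val_cast_of_lt j.isLt, ← Fin.ext_iff] at this

def ve (p : ℕ) [hp : Fact p.Prime] : Fin p ≃ ZMod p := Equiv.ofBijective _ (vmap_bij (p := p))

def Vmat (p : ℕ) : Matrix (Fin p) (Fin p) (ZMod p) := Matrix.vandermonde (vmap p)

lemma Vmat_det_isUnit : IsUnit (Vmat p).det := by
  haveI : NeZero p := ⟨hp.out.pos.ne'⟩
  rw [Vmat, Matrix.det_vandermonde, isUnit_iff_ne_zero]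
  refine Finset.prod_ne_zero_iff.mpr fun i _ => Finset.prod_ne_zero_iff.mpr fun j hj => ?_
  have : i ≠ j := fun h => by simp [h] at hj
  exact sub_ne_zero_of_ne fun h => this (vmap_bij.1 h.symm)

def Nmat (p : ℕ) [Fact p.Prime] : Matrix (Fin p) (Fin p) (ZMod p) := (Vmat p)⁻¹

lemma VN : Vmat p * Nmat p = 1 := Matrix.mul_nonsing_inv _ Vmat_det_isUnit
lemma NV : Nmat p * Vmat p = 1 := Matrix.nonsing_inv_mul _ Vmat_det_isUnit

/-- dual functionals for univariate monomials of degree < p -/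
def lam1 (p : ℕ) [Fact p.Prime] (b : Fin p) (a : ZMod p) : ZMod p := Nmat p b ((ve p).symm a)

lemma lam1_dual (b c : Fin p) :
    ∑ a : ZMod p, lam1 p b a * a ^ (c : ℕ) = if b = c then 1 else 0 := by
  rw [← Equiv.sum_comp (ve p) (fun a => lam1 p b a * a ^ (c : ℕ))]
  have : ∀ j : Fin p, lam1 p b (ve p j) * (ve p j) ^ (c : ℕ) = Nmat p b j * Vmat p j c := by
    intro j; rw [lam1, Equiv.symm_apply_apply]; rfl
  rw [Finset.sum_congr rfl fun j _ => this j, ← Matrix.mul_apply, NV, Matrix.one_apply]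

lemma uni_delta (a x : ZMod p) :
    ∑ b : Fin p, lam1 p b a * x ^ (b : ℕ) = if x = a then 1 else 0 := by
  obtain ⟨i, rfl⟩ := (ve p).surjective x
  obtain ⟨j, rfl⟩ := (ve p).surjective a
  have : ∀ b : Fin p, lam1 p b (ve p j) * (ve p i) ^ (b : ℕ) = Vmat p i b * Nmat p b j := by
    intro b; rw [lam1, Equiv.symm_apply_apply, mul_comm]; rfl
  rw [Finset.sum_congr rfl fun b _ => this b, ← Matrix.mul_apply, VN, Matrix.one_apply]
  simp [EmbeddingLike.apply_eq_iff_eq, eq_comm]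

/-! ### Multivariate monomials -/

variable {m : ℕ}

def mon (e : Fin m → Fin p) (x : Fin m → ZMod p) : ZMod p := ∏ i, x i ^ ((e i : ℕ))

def lam (e : Fin m → Fin p) (a : Fin m → ZMod p) : ZMod p := ∏ i, lam1 p (e i) (a i)

lemma lam_dual (e e' : Fin m → Fin p) :
    ∑ a : Fin m → ZMod p, lam e a * mon e' a = if e = e' then 1 else 0 := by
  have h1 : ∀ a : Fin m → ZMod p, lam e a * mon e' a
      = ∏ i, (lam1 p (e i) (a i) * (a i) ^ ((e' i : ℕ))) := by
    intro a; rw [lam, mon, ← Finset.prod_mul_distrib]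
  rw [Finset.sum_congr rfl fun a _ => h1 a]
  rw [← Fintype.piFinset_univ,
    ← Finset.prod_univ_sum (fun _ => (Finset.univ : Finset (ZMod p)))
    (fun i c => lam1 p (e i) c * c ^ ((e' i : ℕ)))]
  rw [Finset.prod_congr rfl fun i _ => lam1_dual (e i) (e' i)]
  by_cases h : e = e'
  · simp [h]
  · obtain ⟨i, hi⟩ := Function.ne_iff.mp h
    rw [if_neg h]
    exact Finset.prod_eq_zero (Finset.mem_univ i) (by rw [if_neg hi])

lemma multi_delta (a x : Fin m → ZMod p) :
    ∑ e : Fin m → Fin p, lam e a * mon e x = if x = a then 1 else 0 := by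
  have h1 : ∀ e : Fin m → Fin p, lam e a * mon e x
      = ∏ i, (lam1 p (e i) (a i) * (x i) ^ ((e i : ℕ))) := by
    intro e; rw [lam, mon, ← Finset.prod_mul_distrib]
  rw [Finset.sum_congr rfl fun e _ => h1 e]
  rw [← Fintype.piFinset_univ,
    ← Finset.prod_univ_sum (fun _ => (Finset.univ : Finset (Fin p)))
    (fun i c => lam1 p c (a i) * (x i) ^ ((c : ℕ)))]
  rw [Finset.prod_congr rfl fun i _ => uni_delta (a i) (x i)]
  by_cases h : x = a
  · simp [h]
  · obtain ⟨i, hi⟩ := Function.ne_iff.mp h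
    rw [if_neg h]
    exact Finset.prod_eq_zero (Finset.mem_univ i) (by rw [if_neg hi])

/-- canonical coefficients -/
def cCoeff (h : (Fin m → ZMod p) → ZMod p) (e : Fin m → Fin p) : ZMod p :=
  ∑ a : Fin m → ZMod p, lam e a * h a

lemma spanning (h : (Fin m → ZMod p) → ZMod p) (x : Fin m → ZMod p) :
    h x = ∑ e : Fin m → Fin p, cCoeff h e * mon e x := by
  simp only [cCoeff, Finset.sum_mul]
  rw [Finset.sum_comm]
  have : ∀ a : Fin m → ZMod p, ∑ e : Fin m → Fin p, lam e a * h a * mon e x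
      = (if x = a then 1 else 0) * h a := by
    intro a
    have h2 : ∀ e : Fin m → Fin p, lam e a * h a * mon e x = lam e a * mon e x * h a :=
      fun e => by ring
    rw [Finset.sum_congr rfl fun e _ => h2 e, ← Finset.sum_mul, multi_delta]
  rw [Finset.sum_congr rfl fun a _ => this a]
  simp

lemma mon_mul_pt (e : Fin m → Fin p) (a x : Fin m → ZMod p) :
    mon e (fun i => a i * x i) = mon e a * mon e x := by
  rw [mon, mon, mon, ← Finset.prod_mul_distrib]
  exact Finset.prod_congr rfl fun i _ => mul_pow _ _ _

lemma extract_eq (h : (Fin m → ZMod p) → ZMod p) (e0 : Fin m → Fin p) (x : Fin m → ZMod p) :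
    ∑ a : Fin m → ZMod p, lam e0 a * h (fun i => a i * x i)
      = cCoeff h e0 * mon e0 x := by
  have step : ∀ a : Fin m → ZMod p, lam e0 a * h (fun i => a i * x i)
      = ∑ e : Fin m → Fin p, cCoeff h e * mon e x * (lam e0 a * mon e a) := by
    intro a
    rw [spanning h (fun i => a i * x i)]
    rw [Finset.mul_sum]
    exact Finset.sum_congr rfl fun e _ => by rw [mon_mul_pt]; ring
  rw [Finset.sum_congr rfl fun a _ => step a, Finset.sum_comm]
  have : ∀ e : Fin m → Fin p, ∑ a : Fin m → ZMod p, cCoeff h e * mon e x * (lam e0 a * mon e a)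
      = cCoeff h e * mon e x * (if e0 = e then 1 else 0) := by
    intro e; rw [← Finset.mul_sum, lam_dual]
  rw [Finset.sum_congr rfl fun e _ => this e]
  rw [Finset.sum_eq_single e0]
  · simp
  · intro e _ he; simp [Ne.symm he]
  · simp

lemma cCoeff_sum_mon {ι : Type*} [DecidableEq ι] (s : Finset ι) (b : ι → ZMod p)
    (E : ι → (Fin m → Fin p)) (e0 : Fin m → Fin p) :
    cCoeff (fun x => ∑ k ∈ s, b k * mon (E k) x) e0
      = ∑ k ∈ s, b k * (if e0 = E k then 1 else 0) := by
  rw [cCoeff]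
  have : ∀ a : Fin m → ZMod p, lam e0 a * ∑ k ∈ s, b k * mon (E k) a
      = ∑ k ∈ s, b k * (lam e0 a * mon (E k) a) := by
    intro a; rw [Finset.mul_sum]; exact Finset.sum_congr rfl fun k _ => by ring
  rw [Finset.sum_congr rfl fun a _ => this a, Finset.sum_comm]
  exact Finset.sum_congr rfl fun k _ => by rw [← Finset.mul_sum, lam_dual]

end

/-! ### Closure properties of linearly closed clonoids -/

section
variable {p : ℕ}

lemma lin_mem (n : ℕ) (a : Fin (n+1) → ZMod p) :
    (⟨n, fun x => ∑ j, a j * x j⟩ : Ops (ZMod p)) ∈ LinOps p := ⟨n, a, rfl⟩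

lemma mem_congr {D : Set (Ops (ZMod p))} {n : ℕ} {f g : (Fin (n+1) → ZMod p) → ZMod p}
    (hf : (⟨n, f⟩ : Ops (ZMod p)) ∈ D) (hfg : ∀ x, f x = g x) :
    (⟨n, g⟩ : Ops (ZMod p)) ∈ D := by
  rwa [show g = f from (funext hfg).symm]

variable {C : Set (Ops (ZMod p))} (hC : IsLCC p C)
include hC

lemma comp_right {n : ℕ} (m : ℕ) {f : (Fin (n+1) → ZMod p) → ZMod p}
    (hf : (⟨n, f⟩ : Ops (ZMod p)) ∈ C) (A : Fin (n+1) → Fin (m+1) → ZMod p) :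
    (⟨m, fun x => f (fun i => ∑ j, A i j * x j)⟩ : Ops (ZMod p)) ∈ C :=
  hC.2.2 ⟨n, m, f, fun i x => ∑ j, A i j * x j, hf, fun i => lin_mem m (A i), rfl⟩

lemma comp_left {k m : ℕ} (a : Fin (k+1) → ZMod p)
    {g : Fin (k+1) → (Fin (m+1) → ZMod p) → ZMod p}
    (hg : ∀ i, (⟨m, g i⟩ : Ops (ZMod p)) ∈ C) :
    (⟨m, fun x => ∑ i, a i * g i x⟩ : Ops (ZMod p)) ∈ C :=
  hC.2.1 ⟨k, m, fun y => ∑ i, a i * y i, g, lin_mem k a, hg, rfl⟩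

lemma zero_mem (n : ℕ) : (⟨n, fun _ => (0 : ZMod p)⟩ : Ops (ZMod p)) ∈ C := by
  obtain ⟨⟨m, g⟩, hg⟩ := hC.1
  have h1 : (⟨m, fun x => ∑ i : Fin 1, (0 : ZMod p) * (fun _ => g) i x⟩ : Ops (ZMod p)) ∈ C :=
    comp_left hC (fun _ => 0) (fun _ => hg)
  have h2 : (⟨m, fun _ => (0 : ZMod p)⟩ : Ops (ZMod p)) ∈ C := mem_congr h1 (by simp)
  exact mem_congr (comp_right hC n h2 (fun _ _ => 0)) (fun x => rfl)

lemma smul_mem {n : ℕ} (c : ZMod p) {f : (Fin (n+1) → ZMod p) → ZMod p}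
    (hf : (⟨n, f⟩ : Ops (ZMod p)) ∈ C) :
    (⟨n, fun x => c * f x⟩ : Ops (ZMod p)) ∈ C :=
  mem_congr (comp_left hC (fun _ : Fin 1 => c) (fun _ => hf)) (by simp)

lemma add_mem' {n : ℕ} {f g : (Fin (n+1) → ZMod p) → ZMod p}
    (hf : (⟨n, f⟩ : Ops (ZMod p)) ∈ C) (hg : (⟨n, g⟩ : Ops (ZMod p)) ∈ C) :
    (⟨n, fun x => f x + g x⟩ : Ops (ZMod p)) ∈ C := by
  have h1 : (⟨n, fun x => ∑ i : Fin 2, (1 : ZMod p) * (![f, g] i) x⟩ : Ops (ZMod p)) ∈ C :=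
    comp_left hC (fun _ => 1) (fun i => by fin_cases i <;> simpa)
  exact mem_congr h1 (fun x => by simp [Fin.sum_univ_two])

lemma finsum_mem {n : ℕ} {ι : Type*} (s : Finset ι) (b : ι → ZMod p)
    (g : ι → (Fin (n+1) → ZMod p) → ZMod p)
    (hg : ∀ i ∈ s, (⟨n, g i⟩ : Ops (ZMod p)) ∈ C) :
    (⟨n, fun x => ∑ i ∈ s, b i * g i x⟩ : Ops (ZMod p)) ∈ C := by
  classical
  induction s using Finset.induction with
  | empty => exact mem_congr (zero_mem hC n) (by simp)
  | @insert a s ha ih =>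
    have h1 := add_mem' hC (smul_mem hC (b a) (hg a (Finset.mem_insert_self a s)))
      (ih (fun i hi => hg i (Finset.mem_insert_of_mem hi)))
    exact mem_congr h1 (fun x => by rw [Finset.sum_insert ha])

lemma subst_mem {n : ℕ} (m : ℕ) {f : (Fin (n+1) → ZMod p) → ZMod p}
    (hf : (⟨n, f⟩ : Ops (ZMod p)) ∈ C) (σ : Fin (n+1) → Fin (m+1)) :
    (⟨m, fun x => f (fun i => x (σ i))⟩ : Ops (ZMod p)) ∈ C := by
  have h1 := comp_right hC m hf (fun i j => if σ i = j then 1 else 0)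
  refine mem_congr h1 (fun x => congrArg f (funext fun i => ?_))
  simp [ite_mul, Finset.sum_ite_eq]

lemma scale_mem {n : ℕ} {f : (Fin (n+1) → ZMod p) → ZMod p}
    (hf : (⟨n, f⟩ : Ops (ZMod p)) ∈ C) (a : Fin (n+1) → ZMod p) :
    (⟨n, fun x => f (fun i => a i * x i)⟩ : Ops (ZMod p)) ∈ C := by
  have h1 := comp_right hC n hf (fun i j => if i = j then a i else 0)
  refine mem_congr h1 (fun x => congrArg f (funext fun i => ?_))
  rw [Finset.sum_congr rfl (fun j _ => show (if i = j then a i else 0) * x j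
    = if i = j then a i * x j else 0 from by split <;> simp)]
  simp

end

/-! ### Extraction and polarization -/

section
variable {p : ℕ} [hp : Fact p.Prime] {C : Set (Ops (ZMod p))} (hC : IsLCC p C)
include hC

lemma extract_mem {n : ℕ} {h : (Fin (n+1) → ZMod p) → ZMod p}
    (hh : (⟨n, h⟩ : Ops (ZMod p)) ∈ C) (e0 : Fin (n+1) → Fin p) :
    (⟨n, fun x => cCoeff h e0 * mon e0 x⟩ : Ops (ZMod p)) ∈ C := by
  have h1 : (⟨n, fun x => ∑ a : Fin (n+1) → ZMod p, lam e0 a * h (fun i => a i * x i)⟩ :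
      Ops (ZMod p)) ∈ C :=
    finsum_mem hC Finset.univ (lam e0) (fun a x => h (fun i => a i * x i))
      (fun a _ => scale_mem hC hh a)
  exact mem_congr h1 (fun x => extract_eq h e0 x)

lemma mon_mem {n : ℕ} {h : (Fin (n+1) → ZMod p) → ZMod p}
    (hh : (⟨n, h⟩ : Ops (ZMod p)) ∈ C) {e0 : Fin (n+1) → Fin p}
    (hc : cCoeff h e0 ≠ 0) :
    (⟨n, fun x => mon e0 x⟩ : Ops (ZMod p)) ∈ C := by
  have h1 := smul_mem hC (cCoeff h e0)⁻¹ (extract_mem hC hh e0)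
  exact mem_congr h1 (fun x => inv_mul_cancel_left₀ hc _)

end

section
variable {p : ℕ} [hp : Fact p.Prime]

def splitE {n : ℕ} (e : Fin (n+1) → Fin p) (i0 : Fin (n+1)) (k : Fin ((e i0 : ℕ) + 1)) :
    Fin (n+2) → Fin p :=
  Fin.lastCases ⟨(k : ℕ), by have := k.isLt; have := (e i0).isLt; omega⟩
    (fun i => if i = i0 then ⟨(e i0 : ℕ) - (k : ℕ), by have := (e i0).isLt; omega⟩ else e i)

lemma splitE_last_coe {n : ℕ} (e : Fin (n+1) → Fin p) (i0 : Fin (n+1))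
    (k : Fin ((e i0 : ℕ) + 1)) :
    ((splitE e i0 k (Fin.last (n+1)) : Fin p) : ℕ) = (k : ℕ) := by
  rw [splitE, Fin.lastCases_last]

lemma splitE_castSucc_coe {n : ℕ} (e : Fin (n+1) → Fin p) (i0 : Fin (n+1))
    (k : Fin ((e i0 : ℕ) + 1)) (i : Fin (n+1)) :
    ((splitE e i0 k (Fin.castSucc i) : Fin p) : ℕ)
      = if i = i0 then (e i0 : ℕ) - (k : ℕ) else (e i : ℕ) := by
  rw [splitE, Fin.lastCases_castSucc]
  split <;> rfl

variable {C : Set (Ops (ZMod p))} (hC : IsLCC p C)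
include hC

lemma split_mem {n : ℕ} {e : Fin (n+1) → Fin p}
    (hm : (⟨n, fun x => mon e x⟩ : Ops (ZMod p)) ∈ C)
    {i0 : Fin (n+1)} (h2 : 2 ≤ (e i0 : ℕ)) :
    ∃ e' : Fin (n+2) → Fin p,
      (∑ j, ((e' j : ℕ))) = (∑ i, ((e i : ℕ))) ∧
      (∑ j, ((e' j : ℕ) - 1)) + 1 = (∑ i, ((e i : ℕ) - 1)) ∧
      (⟨n+1, fun x => mon e' x⟩ : Ops (ZMod p)) ∈ C := by
  classical
  have hap : (e i0 : ℕ) < p := (e i0).isLt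
  set a : ℕ := (e i0 : ℕ) with haa
  set u : Fin (n+2) := Fin.castSucc i0 with hu
  set w : Fin (n+2) := Fin.last (n+1) with hw
  set A : Fin (n+1) → Fin (n+2) → ZMod p := fun i j =>
    if i = i0 then (if j = u ∨ j = w then 1 else 0)
    else (if j = Fin.castSucc i then 1 else 0) with hA
  have hsub := comp_right hC (n+1) hm A
  have huw : u ≠ w := Fin.ne_of_lt (Fin.castSucc_lt_last i0)
  have hinner : ∀ (x : Fin (n+2) → ZMod p) (i : Fin (n+1)),
      (∑ j, A i j * x j) = if i = i0 then x u + x w else x (Fin.castSucc i) := by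
    intro x i
    by_cases hi : i = i0
    · rw [if_pos hi]
      have step : ∀ j, A i j * x j
          = (if j = u then x j else 0) + (if j = w then x j else 0) := by
        intro j
        rw [hA]
        simp only [if_pos hi]
        by_cases h1 : j = u
        · subst h1; rw [if_pos (Or.inl rfl), if_pos rfl, if_neg huw, one_mul, add_zero]
        · by_cases h2' : j = w
          · subst h2'; rw [if_pos (Or.inr rfl), if_pos rfl, if_neg h1, one_mul, zero_add]
          · rw [if_neg (by tauto), if_neg h1, if_neg h2']; simp
      rw [Finset.sum_congr rfl fun j _ => step j, Finset.sum_add_distrib]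
      simp [Finset.sum_ite_eq']
    · rw [if_neg hi]
      have step : ∀ j, A i j * x j = if j = Fin.castSucc i then x j else 0 := by
        intro j
        rw [hA]
        simp only [if_neg hi]
        by_cases h1 : j = Fin.castSucc i <;> simp [h1]
      rw [Finset.sum_congr rfl fun j _ => step j]
      simp [Finset.sum_ite_eq']
  set R : (Fin (n+2) → ZMod p) → ZMod p :=
    fun x => ∏ i ∈ Finset.univ.erase i0, x (Fin.castSucc i) ^ ((e i : ℕ)) with hR
  have hmonEk : ∀ (k : Fin (a+1)) (x : Fin (n+2) → ZMod p),
      mon (splitE e i0 k) x = x u ^ (a - (k : ℕ)) * R x * x w ^ (k : ℕ) := by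
    intro k x
    rw [mon, Fin.prod_univ_castSucc]
    have h1 : ∀ i : Fin (n+1), x (Fin.castSucc i) ^ ((splitE e i0 k (Fin.castSucc i) : ℕ))
        = if i = i0 then x u ^ (a - (k : ℕ)) else x (Fin.castSucc i) ^ ((e i : ℕ)) := by
      intro i
      rw [splitE_castSucc_coe]
      by_cases hi : i = i0
      · rw [if_pos hi, if_pos hi, hi, ← hu]
      · rw [if_neg hi, if_neg hi]
    rw [Finset.prod_congr rfl fun i _ => h1 i, splitE_last_coe,
      ← Finset.mul_prod_erase Finset.univ _ (Finset.mem_univ i0), if_pos rfl]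
    have h2 : ∏ i ∈ Finset.univ.erase i0,
        (if i = i0 then x u ^ (a - (k : ℕ)) else x (Fin.castSucc i) ^ ((e i : ℕ))) = R x :=
      Finset.prod_congr rfl fun i hi => if_neg (Finset.ne_of_mem_erase hi)
    rw [h2, ← hw]
  have hexp : ∀ x : Fin (n+2) → ZMod p,
      mon e (fun i => ∑ j, A i j * x j)
        = ∑ k : Fin (a+1), ((a.choose (k : ℕ) : ℕ) : ZMod p) * mon (splitE e i0 k) x := by
    intro x
    rw [show (fun i => ∑ j, A i j * x j)
      = fun i => if i = i0 then x u + x w else x (Fin.castSucc i) from funext (hinner x)]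
    rw [mon, ← Finset.mul_prod_erase Finset.univ _ (Finset.mem_univ i0), if_pos rfl]
    have h2 : ∏ i ∈ Finset.univ.erase i0,
        (if i = i0 then x u + x w else x (Fin.castSucc i)) ^ ((e i : ℕ)) = R x :=
      Finset.prod_congr rfl fun i hi => by rw [if_neg (Finset.ne_of_mem_erase hi)]
    rw [h2, add_comm (x u) (x w), add_pow, Finset.sum_mul]
    rw [← Fin.sum_univ_eq_sum_range
      (fun m0 => x w ^ m0 * x u ^ (a - m0) * ((a.choose m0 : ℕ) : ZMod p) * R x) (a+1)]
    exact Finset.sum_congr rfl fun k _ => by rw [hmonEk]; ring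
  set one : Fin (a+1) := ⟨1, by omega⟩ with hone
  have hone1 : (one : ℕ) = 1 := rfl
  have hFC : (⟨n+1, fun x => ∑ k : Fin (a+1),
      ((a.choose (k : ℕ) : ℕ) : ZMod p) * mon (splitE e i0 k) x⟩ : Ops (ZMod p)) ∈ C :=
    mem_congr hsub hexp
  have hcc : cCoeff (fun x => ∑ k : Fin (a+1),
      ((a.choose (k : ℕ) : ℕ) : ZMod p) * mon (splitE e i0 k) x) (splitE e i0 one)
      = ((a : ℕ) : ZMod p) := by
    rw [cCoeff_sum_mon Finset.univ (fun k : Fin (a+1) => ((a.choose (k : ℕ) : ℕ) : ZMod p))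
      (fun k => splitE e i0 k) (splitE e i0 one)]
    rw [Finset.sum_eq_single one]
    · rw [if_pos rfl, mul_one, hone1, Nat.choose_one_right]
    · intro k _ hk
      rw [if_neg, mul_zero]
      intro hEk
      apply hk
      have h3 := congrArg (fun f => ((f (Fin.last (n+1)) : Fin p) : ℕ)) hEk
      simp only [splitE_last_coe] at h3
      exact Fin.ext (by omega)
    · intro hco; exact absurd (Finset.mem_univ one) hco
  have ha0 : ((a : ℕ) : ZMod p) ≠ 0 := by
    intro h0
    rw [ZMod.natCast_eq_zero_iff] at h0
    exact absurd (Nat.le_of_dvd (by omega) h0) (by omega)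
  have hmonE : (⟨n+1, fun x => mon (splitE e i0 one) x⟩ : Ops (ZMod p)) ∈ C :=
    mon_mem hC hFC (by rw [hcc]; exact ha0)
  refine ⟨splitE e i0 one, ?_, ?_, hmonE⟩
  · rw [Fin.sum_univ_castSucc, Finset.sum_congr rfl
      (fun i _ => splitE_castSucc_coe e i0 one i), splitE_last_coe, hone1, ← haa]
    have hL : ∑ i : Fin (n+1), (if i = i0 then a - 1 else (e i : ℕ))
        = (a - 1) + ∑ i ∈ Finset.univ.erase i0, (e i : ℕ) := by
      rw [← Finset.add_sum_erase Finset.univ _ (Finset.mem_univ i0), if_pos rfl]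
      congr 1
      exact Finset.sum_congr rfl fun i hi => if_neg (Finset.ne_of_mem_erase hi)
    have hRe : ∑ i : Fin (n+1), (e i : ℕ)
        = a + ∑ i ∈ Finset.univ.erase i0, (e i : ℕ) :=
      (Finset.add_sum_erase Finset.univ _ (Finset.mem_univ i0)).symm
    omega
  · rw [Fin.sum_univ_castSucc, Finset.sum_congr rfl
      (fun i _ => by rw [splitE_castSucc_coe e i0 one i]), splitE_last_coe, hone1, ← haa]
    have hL : ∑ i : Fin (n+1), ((if i = i0 then a - 1 else (e i : ℕ)) - 1)
        = (a - 1 - 1) + ∑ i ∈ Finset.univ.erase i0, ((e i : ℕ) - 1) := by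
      rw [← Finset.add_sum_erase Finset.univ _ (Finset.mem_univ i0), if_pos rfl]
      congr 1
      exact Finset.sum_congr rfl fun i hi => by rw [if_neg (Finset.ne_of_mem_erase hi)]
    have hRe : ∑ i : Fin (n+1), ((e i : ℕ) - 1)
        = (a - 1) + ∑ i ∈ Finset.univ.erase i0, ((e i : ℕ) - 1) :=
      (Finset.add_sum_erase Finset.univ _ (Finset.mem_univ i0)).symm
    omega

lemma polar (N : ℕ) :
    ∀ (n : ℕ) (e : Fin (n+1) → Fin p), (∑ i, ((e i : ℕ) - 1)) = N →
    (⟨n, fun x => mon e x⟩ : Ops (ZMod p)) ∈ C →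
    ∀ d' : ℕ, (∑ i, (e i : ℕ)) = d' + 1 →
    (⟨d', fun x => ∏ j, x j⟩ : Ops (ZMod p)) ∈ C := by
  induction N with
  | zero =>
    intro n e hexc hm d' hdeg
    have hle : ∀ i, (e i : ℕ) ≤ 1 := by
      intro i
      have := (Finset.sum_eq_zero_iff.mp hexc) i (Finset.mem_univ i)
      omega
    have σE : (Σ i : Fin (n+1), Fin ((e i : ℕ))) ≃ Fin (d'+1) :=
      Fintype.equivFinOfCardEq (by simp [hdeg])
    have hs := subst_mem hC d' hm (fun i =>
      if h : 0 < (e i : ℕ) then σE ⟨i, ⟨0, h⟩⟩ else ⟨0, Nat.succ_pos _⟩)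
    refine mem_congr hs fun y => ?_
    calc mon e (fun i => y (if h : 0 < (e i : ℕ) then σE ⟨i, ⟨0, h⟩⟩ else ⟨0, Nat.succ_pos _⟩))
        = ∏ i, (y (if h : 0 < (e i : ℕ) then σE ⟨i, ⟨0, h⟩⟩
            else ⟨0, Nat.succ_pos _⟩)) ^ ((e i : ℕ)) := rfl
      _ = ∏ i, ∏ _k : Fin ((e i : ℕ)), y (if h : 0 < (e i : ℕ) then σE ⟨i, ⟨0, h⟩⟩
            else ⟨0, Nat.succ_pos _⟩) := by
          exact Finset.prod_congr rfl fun i _ => by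
            rw [Finset.prod_const, Finset.card_univ, Fintype.card_fin]
      _ = ∏ i, ∏ k : Fin ((e i : ℕ)), y (σE ⟨i, k⟩) := by
          refine Finset.prod_congr rfl fun i _ => Finset.prod_congr rfl fun k _ => ?_
          have h0 : 0 < (e i : ℕ) := k.pos
          rw [dif_pos h0]
          have hk0 : k = ⟨0, h0⟩ := Fin.ext (by have := k.isLt; have := hle i; omega)
          rw [hk0]
      _ = ∏ s : (Σ i : Fin (n+1), Fin ((e i : ℕ))), y (σE s) := by
          rw [← Finset.univ_sigma_univ, Finset.prod_sigma]
      _ = ∏ j, y j := Equiv.prod_comp σE y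
  | succ N ih =>
    intro n e hexc hm d' hdeg
    have hex : ∃ i0, 2 ≤ (e i0 : ℕ) := by
      by_contra hno
      push_neg at hno
      have : ∑ i, ((e i : ℕ) - 1) = 0 :=
        Finset.sum_eq_zero fun i _ => by have := hno i; omega
      omega
    obtain ⟨i0, hi0⟩ := hex
    obtain ⟨e', hdeg', hexc', hm'⟩ := split_mem hC hm hi0
    refine ih (n+1) e' ?_ hm' d' ?_
    · show (∑ j : Fin (n+2), ((e' j : ℕ) - 1)) = N
      omega
    · show (∑ j : Fin (n+2), ((e' j : ℕ))) = d' + 1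
      omega

end

/-! ### genLC facts -/

section
variable {p : ℕ}

lemma genLC_isLCC (F : Set (Ops (ZMod p))) : IsLCC p (genLC p F) := by
  refine ⟨⟨⟨0, fun _ => 0⟩, ?_⟩, ?_, ?_⟩
  · intro D hD
    exact zero_mem hD.1 0
  · rintro x ⟨n, m, f, g, hf, hg, rfl⟩ D hD
    exact hD.1.2.1 ⟨n, m, f, g, hf, fun i => hg i D hD, rfl⟩
  · rintro x ⟨n, m, f, g, hf, hg, rfl⟩ D hD
    exact hD.1.2.2 ⟨n, m, f, g, hf D hD, hg, rfl⟩

lemma subset_genLC (F : Set (Ops (ZMod p))) : F ⊆ genLC p F :=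
  fun x hx D hD => hD.2 hx

lemma inducedOp_prod (p k : ℕ) :
    inducedOp p k (∏ i ∈ Finset.range (k+1), MvPolynomial.X i)
      = fun x => ∏ j : Fin (k+1), x j := by
  funext x
  rw [inducedOp, map_prod]
  simp only [MvPolynomial.eval_X]
  rw [← Fin.prod_univ_eq_prod_range (fun i => if h : i < k+1 then x ⟨i, h⟩ else 0) (k+1)]
  exact Finset.prod_congr rfl fun j _ => by simp [j.isLt]

end

end S11
/-- Every linearly closed clonoid on `ZMod p` is generated by the
operations induced by a subset of `{1} ∪ {x₀x₁⋯x_{k} : k ∈ ℕ}`, each taken in its minimal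
arity. Here `I` encodes the choice: `0 ∈ I` means the constant `1` (as a unary operation)
is a generator, and `k + 1 ∈ I` means the product `x₀⋯x_k` (as a `(k+1)`-ary operation)
is a generator. -/
theorem statement11 (p : ℕ) (hp : p.Prime) (C : Set (Ops (ZMod p))) (hC : IsLCC p C) :
    ∃ I : Set ℕ,
      C = genLC p
        ({ h | 0 ∈ I ∧ h = ⟨0, fun _ => (1 : ZMod p)⟩ } ∪
         { h | ∃ k : ℕ, k + 1 ∈ I ∧
            h = ⟨k, inducedOp p k (∏ i ∈ Finset.range (k + 1), MvPolynomial.X i)⟩ }) := by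
  classical
  haveI hpf : Fact p.Prime := ⟨hp⟩
  open S11 in
  set I : Set ℕ := {d : ℕ | (d = 0 ∧ (⟨0, fun _ => (1 : ZMod p)⟩ : Ops (ZMod p)) ∈ C)
      ∨ ∃ k : ℕ, d = k + 1 ∧ (⟨k, fun x => ∏ j, x j⟩ : Ops (ZMod p)) ∈ C} with hI
  refine ⟨I, ?_⟩
  set F : Set (Ops (ZMod p)) := ({ h | 0 ∈ I ∧ h = ⟨0, fun _ => (1 : ZMod p)⟩ } ∪
         { h | ∃ k : ℕ, k + 1 ∈ I ∧
            h = ⟨k, inducedOp p k (∏ i ∈ Finset.range (k + 1), MvPolynomial.X i)⟩ }) with hF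
  have hFC : F ⊆ C := by
    rintro h (⟨h0, rfl⟩ | ⟨k, hk, rfl⟩)
    · rcases h0 with ⟨-, hmem⟩ | ⟨k, hk0, -⟩
      · exact hmem
      · exact absurd hk0 (by omega)
    · rcases hk with ⟨habs, -⟩ | ⟨k', hk', hmem⟩
      · exact absurd habs (by omega)
      · have hkk : k' = k := by omega
        subst hkk
        rw [S11.inducedOp_prod]
        exact hmem
  have hG := S11.genLC_isLCC (p := p) F
  refine Set.Subset.antisymm ?_ (Set.sInter_subset_of_mem ⟨hC, hFC⟩)
  rintro ⟨n, h⟩ hop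
  have hmonC : ∀ e : Fin (n+1) → Fin p, S11.cCoeff h e ≠ 0 →
      (⟨n, fun x => S11.mon e x⟩ : Ops (ZMod p)) ∈ C := fun e hce => S11.mon_mem hC hop hce
  have hmonG : ∀ e : Fin (n+1) → Fin p, S11.cCoeff h e ≠ 0 →
      (⟨n, fun x => S11.mon e x⟩ : Ops (ZMod p)) ∈ genLC p F := by
    intro e hce
    cases hd : (∑ i, ((e i : ℕ))) with
    | zero =>
      have he0 : ∀ i, ((e i : ℕ)) = 0 :=
        fun i => Finset.sum_eq_zero_iff.mp hd i (Finset.mem_univ i)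
      have h1C : (⟨0, fun _ => (1 : ZMod p)⟩ : Ops (ZMod p)) ∈ C :=
        S11.mem_congr (S11.subst_mem hC 0 (hmonC e hce) (fun _ => 0))
          (fun x => by simp [S11.mon, he0])
      have h0I : (0 : ℕ) ∈ I := by rw [hI]; exact Or.inl ⟨rfl, h1C⟩
      have hgen1 : (⟨0, fun _ => (1 : ZMod p)⟩ : Ops (ZMod p)) ∈ genLC p F :=
        S11.subset_genLC F (by rw [hF]; exact Or.inl ⟨h0I, rfl⟩)
      exact S11.mem_congr (S11.subst_mem hG n hgen1 (fun _ => 0))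
        (fun x => by simp [S11.mon, he0])
    | succ k =>
      have hpolar : (⟨k, fun x => ∏ j, x j⟩ : Ops (ZMod p)) ∈ C :=
        S11.polar hC (∑ i, ((e i : ℕ) - 1)) n e rfl (hmonC e hce) k hd
      have hkI : k + 1 ∈ I := by rw [hI]; exact Or.inr ⟨k, rfl, hpolar⟩
      have hgenP : (⟨k, fun x => ∏ j, x j⟩ : Ops (ZMod p)) ∈ genLC p F :=
        S11.subset_genLC F (by rw [hF]; exact Or.inr ⟨k, hkI, by rw [S11.inducedOp_prod]⟩)
      have σE : (Σ i : Fin (n+1), Fin ((e i : ℕ))) ≃ Fin (k+1) :=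
        Fintype.equivFinOfCardEq (by simp [hd])
      refine S11.mem_congr (S11.subst_mem hG n hgenP (fun j => (σE.symm j).1)) fun x => ?_
      calc ∏ j : Fin (k+1), x ((σE.symm j).1)
          = ∏ s : (Σ i : Fin (n+1), Fin ((e i : ℕ))), x s.1 :=
            Equiv.prod_comp σE.symm (fun s => x s.1)
        _ = ∏ i, ∏ _k : Fin ((e i : ℕ)), x i := by
            rw [← Finset.univ_sigma_univ, Finset.prod_sigma]
        _ = S11.mon e x := by
            rw [S11.mon]
            exact Finset.prod_congr rfl fun i _ => by
              rw [Finset.prod_const, Finset.card_univ, Fintype.card_fin]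
  have hspan : ∀ x, h x = ∑ e ∈ Finset.univ.filter (fun e => S11.cCoeff h e ≠ 0),
      S11.cCoeff h e * S11.mon e x := by
    intro x
    rw [S11.spanning h x]
    refine (Finset.sum_subset (Finset.filter_subset _ _) ?_).symm
    intro e _ hef
    have h0 : S11.cCoeff h e = 0 := by
      by_contra hne
      exact hef (Finset.mem_filter.mpr ⟨Finset.mem_univ e, hne⟩)
    rw [h0, zero_mul]
  exact S11.mem_congr (S11.finsum_mem hG _ (S11.cCoeff h) (fun e x => S11.mon e x)
      (fun e he => hmonG e (Finset.mem_filter.mp he).2)) (fun x => (hspan x).symm)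
end

section
/- Let p be a prime and let C be a linearly closed clonoid on Z_p. Then there exists a p-minor subset M of ℕ₀ such that C = 𝒞(M) (i.e., the map 𝒞 is surjective onto the linearly closed clonoids on Z_p). -/
section Aux

open MvPolynomial Finset

variable {p : ℕ}

private lemma opEq {n : ℕ} {f g : (Fin (n + 1) → ZMod p) → ZMod p} (h : ∀ x, f x = g x) :
    (⟨n, f⟩ : Ops (ZMod p)) = ⟨n, g⟩ :=
  congrArg (Sigma.mk n) (funext h)

variable {C : Set (Ops (ZMod p))}

private lemma memL3 (hC : IsLCC p C) {n : ℕ} {f : (Fin (n + 1) → ZMod p) → ZMod p}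
    (hf : (⟨n, f⟩ : Ops (ZMod p)) ∈ C) (m : ℕ) (A : Fin (n + 1) → Fin (m + 1) → ZMod p) :
    (⟨m, fun x => f (fun i => ∑ j, A i j * x j)⟩ : Ops (ZMod p)) ∈ C :=
  hC.2.2 ⟨n, m, f, fun i x => ∑ j, A i j * x j, hf, fun i => ⟨m, A i, rfl⟩, rfl⟩

private lemma memSum (hC : IsLCC p C) {ι : Type} [Fintype ι] [Nonempty ι] (c : ι → ZMod p)
    {n : ℕ} (f : ι → (Fin (n + 1) → ZMod p) → ZMod p)
    (hf : ∀ k, (⟨n, f k⟩ : Ops (ZMod p)) ∈ C) :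
    (⟨n, fun x => ∑ k, c k * f k x⟩ : Ops (ZMod p)) ∈ C := by
  obtain ⟨m, hm⟩ : ∃ m, Fintype.card ι = m + 1 :=
    ⟨Fintype.card ι - 1, (Nat.succ_pred_eq_of_pos Fintype.card_pos).symm⟩
  let e : ι ≃ Fin (m + 1) := (Fintype.equivFin ι).trans (finCongr hm)
  have hmem : (⟨n, fun x => ∑ i : Fin (m + 1), c (e.symm i) * f (e.symm i) x⟩ :
      Ops (ZMod p)) ∈ C :=
    hC.2.1 ⟨m, n, fun y => ∑ i, c (e.symm i) * y i, fun i => f (e.symm i),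
      ⟨m, fun i => c (e.symm i), rfl⟩, fun i => hf _, rfl⟩
  have : (⟨n, fun x => ∑ k, c k * f k x⟩ : Ops (ZMod p)) =
      ⟨n, fun x => ∑ i : Fin (m + 1), c (e.symm i) * f (e.symm i) x⟩ :=
    opEq fun x => (Equiv.sum_comp e.symm (fun k => c k * f k x)).symm
  rw [this]; exact hmem

private lemma memScale (hC : IsLCC p C) {n : ℕ} {f : (Fin (n + 1) → ZMod p) → ZMod p}
    (hf : (⟨n, f⟩ : Ops (ZMod p)) ∈ C) (c : ZMod p) :
    (⟨n, fun x => c * f x⟩ : Ops (ZMod p)) ∈ C := by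
  have h1 := memSum hC (ι := Fin 1) (fun _ => c) (fun _ => f) (fun _ => hf)
  have h2 : (⟨n, fun x => c * f x⟩ : Ops (ZMod p)) =
      ⟨n, fun x => ∑ k : Fin 1, (fun _ => c) k * (fun _ => f) k x⟩ := opEq fun x => by simp
  rw [h2]; exact h1

private lemma memZero (hC : IsLCC p C) (n : ℕ) :
    (⟨n, fun _ => (0 : ZMod p)⟩ : Ops (ZMod p)) ∈ C := by
  obtain ⟨⟨n₀, f₀⟩, h₀⟩ := hC.1
  have h1 := memScale hC (memL3 hC h₀ n (fun _ _ => 0)) 0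
  have h2 : (⟨n, fun _ => (0 : ZMod p)⟩ : Ops (ZMod p)) =
      ⟨n, fun x => 0 * f₀ fun i => ∑ j : Fin (n + 1), 0 * x j⟩ := opEq fun x => by simp
  rw [h2]; exact h1

/-- The lift of a tuple to an assignment of all variables. -/
private def liftF (n : ℕ) (x : Fin (n + 1) → ZMod p) : ℕ → ZMod p :=
  fun i => if h : i < n + 1 then x ⟨i, h⟩ else 0

private lemma inducedOp_def (n : ℕ) (f : MvPolynomial ℕ (ZMod p)) (x : Fin (n + 1) → ZMod p) :
    inducedOp p n f x = eval (liftF n x) f := rfl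

private lemma liftF_apply {n : ℕ} (x : Fin (n + 1) → ZMod p) {i : ℕ} (h : i < n + 1) :
    liftF n x i = x ⟨i, h⟩ := dif_pos h

private lemma prodExt {n : ℕ} (w : ℕ →₀ ℕ) (hw : ∀ i ∈ w.support, i < n + 1)
    (y : Fin (n + 1) → ZMod p) :
    (∏ i ∈ w.support, liftF n y i ^ w i) = ∏ i : Fin (n + 1), y i ^ w i.val := by
  have h1 : ∀ i : Fin (n + 1), y i ^ w i.val = liftF n y i.val ^ w i.val := by
    intro i; rw [liftF_apply y i.2]
  calc (∏ i ∈ w.support, liftF n y i ^ w i)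
      = ∏ i ∈ Finset.range (n + 1), liftF n y i ^ w i := by
        refine Finset.prod_subset (fun i hi => Finset.mem_range.mpr (hw i hi)) ?_
        intro i _ hi
        rw [Finsupp.notMem_support_iff.mp hi, pow_zero]
    _ = ∏ i : Fin (n + 1), liftF n y i.val ^ w i.val :=
        (Fin.prod_univ_eq_prod_range (fun i => liftF n y i ^ w i) (n + 1)).symm
    _ = ∏ i : Fin (n + 1), y i ^ w i.val := by
        exact Finset.prod_congr rfl fun i _ => (h1 i).symm

private lemma evalMono {n : ℕ} (e : ℕ →₀ ℕ) (he : ∀ i ∈ e.support, i < n + 1) (c : ZMod p)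
    (x : Fin (n + 1) → ZMod p) :
    inducedOp p n (monomial e c) x = c * ∏ i : Fin (n + 1), x i ^ e i.val := by
  rw [inducedOp_def, eval_monomial]
  congr 1
  exact prodExt e he x

end Aux
section Aux2

open MvPolynomial Finset

variable {p : ℕ} [hpF : Fact p.Prime]

/-- Dual weights for monomial extraction. -/
private def weight (p s : ℕ) [Fact p.Prime] (β : ZMod p) : ZMod p :=
  if s = 0 then (if β = 0 then 1 else 0) else -β ^ (p - 1 - s)

private lemma sum_pow_eq (a : ℕ) (ha : 0 < a) :
    ∑ β : ZMod p, β ^ a = if (p - 1) ∣ a then -1 else 0 := by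
  classical
  have hcard : Fintype.card (ZMod p) = p := ZMod.card p
  have h := FiniteField.sum_pow_units (ZMod p) a
  rw [hcard] at h
  rw [← h]
  let φ : (ZMod p)ˣ ↪ ZMod p := ⟨fun x => (x : ZMod p), Units.val_injective⟩
  have hmap : univ.map φ = univ \ {(0 : ZMod p)} := by
    ext x
    simp only [mem_map, mem_univ, Function.Embedding.coeFn_mk, true_and, mem_sdiff,
      mem_singleton, φ]
    exact ⟨fun ⟨u, hu⟩ => by simp [← hu], fun hx => ⟨Units.mk0 x hx, rfl⟩⟩
  calc ∑ β : ZMod p, β ^ a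
      = ∑ β ∈ univ \ {(0 : ZMod p)}, β ^ a := by
        rw [← Finset.sum_sdiff (Finset.subset_univ {(0 : ZMod p)}), Finset.sum_singleton,
          zero_pow ha.ne', add_zero]
    _ = ∑ x : (ZMod p)ˣ, ((x : ZMod p)) ^ a := by rw [← hmap, Finset.sum_map]; rfl

private lemma deltaSum (s t : ℕ) (hs : s ≤ p - 1) (ht : t ≤ p - 1) :
    ∑ β : ZMod p, weight p s β * β ^ t = if t = s then 1 else 0 := by
  have hp2 : 2 ≤ p := hpF.out.two_le
  by_cases hs0 : s = 0
  · subst hs0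
    have h1 : ∑ β : ZMod p, weight p 0 β * β ^ t =
        ∑ β : ZMod p, if β = 0 then β ^ t else 0 :=
      Finset.sum_congr rfl fun β _ => by
        by_cases h : β = 0 <;> simp [weight, h]
    rw [h1, Finset.sum_ite_eq' Finset.univ (0 : ZMod p) (fun β => β ^ t),
      if_pos (mem_univ _)]
    by_cases ht0 : t = 0
    · simp [ht0]
    · simp [zero_pow ht0, ht0]
  · have h1 : ∑ β : ZMod p, weight p s β * β ^ t =
        -∑ β : ZMod p, β ^ (p - 1 - s + t) := by
      rw [← Finset.sum_neg_distrib]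
      exact Finset.sum_congr rfl fun β _ => by
        simp only [weight, if_neg hs0]; rw [pow_add, neg_mul]
    rw [h1]
    by_cases ha0 : p - 1 - s + t = 0
    · have : ∑ β : ZMod p, β ^ (p - 1 - s + t) = 0 := by
        rw [ha0]
        simp only [pow_zero, Finset.sum_const, Finset.card_univ, ZMod.card, nsmul_eq_mul,
          mul_one]
        exact ZMod.natCast_self p
      rw [this, neg_zero, if_neg (by omega)]
    · rw [sum_pow_eq _ (Nat.pos_of_ne_zero ha0)]
      by_cases hts : t = s
      · rw [if_pos hts, if_pos ⟨1, by omega⟩, neg_neg]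
      · rw [if_neg hts, if_neg ?_, neg_zero]
        rintro ⟨c, hc⟩
        have hc0 : c ≠ 0 := by rintro rfl; omega
        have hc1 : c < 2 := by
          by_contra h
          push_neg at h
          have h2 : (p - 1) * 2 ≤ (p - 1) * c := Nat.mul_le_mul_left _ h
          omega
        have : c = 1 := by omega
        subst this
        omega

private lemma tauExists (w : ℕ →₀ ℕ) (n d : ℕ) (hw : ∀ i ∈ w.support, i < n + 1)
    (hd : (w.sum fun _ k => k) = d) :
    ∃ τ : Fin d → Fin (n + 1), ∀ x : Fin (n + 1) → ZMod p,
      ∏ j, x (τ j) = ∏ i : Fin (n + 1), x i ^ w i.val := by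
  classical
  have hcard : Fintype.card (Σ i : Fin (n + 1), Fin (w i.val)) = d := by
    rw [Fintype.card_sigma]
    simp only [Fintype.card_fin]
    rw [← hd, Finsupp.sum]
    rw [Fin.sum_univ_eq_sum_range (fun i => w i)]
    refine (Finset.sum_subset (fun i hi => Finset.mem_range.mpr (hw i hi)) ?_).symm
    intro i _ hi
    exact Finsupp.notMem_support_iff.mp hi
  let E : (Σ i : Fin (n + 1), Fin (w i.val)) ≃ Fin d := Fintype.equivFinOfCardEq hcard
  refine ⟨fun j => (E.symm j).1, fun x => ?_⟩
  calc ∏ j : Fin d, x (E.symm j).1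
      = ∏ t : (Σ i : Fin (n + 1), Fin (w i.val)), x (E.symm (E t)).1 :=
        (Equiv.prod_comp E (fun j => x (E.symm j).1)).symm
    _ = ∏ t : (Σ i : Fin (n + 1), Fin (w i.val)), x t.1 :=
        Finset.prod_congr rfl fun t _ => by rw [Equiv.symm_apply_apply]
    _ = ∏ i : Fin (n + 1), x i ^ w i.val := by
        rw [← Finset.univ_sigma_univ, Finset.prod_sigma]
        exact Finset.prod_congr rfl fun i _ => by
          simp

end Aux2
section Aux3

open MvPolynomial Finset

variable {p : ℕ} [hpF : Fact p.Prime] {C : Set (Ops (ZMod p))}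

private lemma stepB (hC : IsLCC p C) {n : ℕ} {P : MvPolynomial ℕ (ZMod p)}
    (hred : IsReducedPoly p P) (hv : ∀ i ∈ P.vars, i < n + 1)
    (hmem : (⟨n, inducedOp p n P⟩ : Ops (ZMod p)) ∈ C) {e : ℕ →₀ ℕ} (he : e ∈ P.support) :
    (⟨n, inducedOp p n (monomial e 1)⟩ : Ops (ZMod p)) ∈ C := by
  classical
  set c := coeff e P with hcdef
  have hc : c ≠ 0 := mem_support_iff.mp he
  have hsupp : ∀ e' ∈ P.support, ∀ i ∈ e'.support, i < n + 1 := fun e' he' i hi =>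
    hv i ((mem_vars i).mpr ⟨e', he', hi⟩)
  have hesupp := hsupp e he
  have hFmem : ∀ b : Fin (n + 1) → ZMod p,
      (⟨n, fun x => inducedOp p n P (fun i => b i * x i)⟩ : Ops (ZMod p)) ∈ C := by
    intro b
    have h1 := memL3 hC hmem n (fun i j => if i = j then b i else 0)
    have h2 : (⟨n, fun x => inducedOp p n P (fun i => b i * x i)⟩ : Ops (ZMod p)) =
        ⟨n, fun x => inducedOp p n P (fun i => ∑ j, (if i = j then b i else 0) * x j)⟩ := by
      refine opEq fun x => ?_
      congr 1
      funext i
      simp [ite_mul, Finset.sum_ite_eq]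
    rw [h2]; exact h1
  have hS := memSum hC (ι := (Fin (n + 1) → ZMod p))
    (fun b => ∏ i, weight p (e i.val) (b i))
    (fun b x => inducedOp p n P (fun i => b i * x i)) hFmem
  have key : ∀ x : Fin (n + 1) → ZMod p,
      ∑ b : Fin (n + 1) → ZMod p, (∏ i, weight p (e i.val) (b i)) *
        inducedOp p n P (fun i => b i * x i) = c * ∏ i : Fin (n + 1), x i ^ e i.val := by
    intro x
    have hFval : ∀ b : Fin (n + 1) → ZMod p, inducedOp p n P (fun i => b i * x i) =
        ∑ e' ∈ P.support, coeff e' P *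
          ((∏ i : Fin (n + 1), b i ^ e' i.val) * (∏ i : Fin (n + 1), x i ^ e' i.val)) := by
      intro b
      rw [inducedOp_def, eval_eq]
      refine Finset.sum_congr rfl fun e' he' => ?_
      congr 1
      have h3 : (∏ i ∈ e'.support, liftF n (fun i => b i * x i) i ^ e' i)
          = ∏ i : Fin (n + 1), (b i * x i) ^ e' i.val := prodExt e' (hsupp e' he') _
      rw [h3, ← Finset.prod_mul_distrib]
      exact Finset.prod_congr rfl fun i _ => mul_pow _ _ _
    calc ∑ b : Fin (n + 1) → ZMod p, (∏ i, weight p (e i.val) (b i)) *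
          inducedOp p n P (fun i => b i * x i)
        = ∑ b : Fin (n + 1) → ZMod p, ∑ e' ∈ P.support,
            (coeff e' P * (∏ i : Fin (n + 1), x i ^ e' i.val)) *
              ∏ i : Fin (n + 1), (weight p (e i.val) (b i) * b i ^ e' i.val) := by
          refine Finset.sum_congr rfl fun b _ => ?_
          rw [hFval b, Finset.mul_sum]
          refine Finset.sum_congr rfl fun e' _ => ?_
          rw [Finset.prod_mul_distrib]
          ring
      _ = ∑ e' ∈ P.support, (coeff e' P * (∏ i : Fin (n + 1), x i ^ e' i.val)) *
            ∑ b : Fin (n + 1) → ZMod p,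
              ∏ i : Fin (n + 1), (weight p (e i.val) (b i) * b i ^ e' i.val) := by
          rw [Finset.sum_comm]
          exact Finset.sum_congr rfl fun e' _ => (Finset.mul_sum _ _ _).symm
      _ = ∑ e' ∈ P.support, (coeff e' P * (∏ i : Fin (n + 1), x i ^ e' i.val)) *
            (if e' = e then 1 else 0) := by
          refine Finset.sum_congr rfl fun e' he' => ?_
          congr 1
          rw [← Fintype.prod_sum (fun (i : Fin (n + 1)) (β : ZMod p) =>
            weight p (e i.val) β * β ^ e' i.val)]
          have hδ : ∀ i : Fin (n + 1),
              (∑ β : ZMod p, weight p (e i.val) β * β ^ e' i.val) =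
                if e' i.val = e i.val then 1 else 0 := fun i =>
            deltaSum _ _ (hred e he i.val) (hred e' he' i.val)
          rw [Finset.prod_congr rfl fun i _ => hδ i]
          by_cases hee : e' = e
          · subst hee; simp
          · rw [if_neg hee]
            obtain ⟨i₀, hi₀⟩ : ∃ i₀, e' i₀ ≠ e i₀ := by
              by_contra h; push_neg at h; exact hee (Finsupp.ext h)
            have hi₀lt : i₀ < n + 1 := by
              by_cases h1 : e' i₀ = 0
              · have h2 : e i₀ ≠ 0 := fun h => hi₀ (by rw [h1, h])
                exact hesupp i₀ (Finsupp.mem_support_iff.mpr h2)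
              · exact hsupp e' he' i₀ (Finsupp.mem_support_iff.mpr h1)
            refine Finset.prod_eq_zero (Finset.mem_univ (⟨i₀, hi₀lt⟩ : Fin (n + 1))) ?_
            exact if_neg hi₀
      _ = c * ∏ i : Fin (n + 1), x i ^ e i.val := by
          rw [Finset.sum_eq_single_of_mem e he
            (fun e' _ hne => by rw [if_neg hne, mul_zero])]
          rw [if_pos rfl, mul_one]
  have hmono_c : (⟨n, inducedOp p n (monomial e c)⟩ : Ops (ZMod p)) ∈ C := by
    have heq : (⟨n, fun x => ∑ b : Fin (n + 1) → ZMod p,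
        (fun b => ∏ i, weight p (e i.val) (b i)) b *
          (fun b x => inducedOp p n P (fun i => b i * x i)) b x⟩ : Ops (ZMod p)) =
        ⟨n, inducedOp p n (monomial e c)⟩ :=
      opEq fun x => by rw [evalMono e hesupp c x]; exact key x
    rw [← heq]; exact hS
  have h2 := memScale hC hmono_c c⁻¹
  have heq2 : (⟨n, fun x => c⁻¹ * inducedOp p n (monomial e c) x⟩ : Ops (ZMod p)) =
      ⟨n, inducedOp p n (monomial e 1)⟩ := opEq fun x => by
    rw [evalMono e hesupp, evalMono e hesupp, ← mul_assoc, inv_mul_cancel₀ hc, one_mul]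
  rw [← heq2]; exact h2

end Aux3
section Aux4

open MvPolynomial Finset

variable {p : ℕ} [hpF : Fact p.Prime] {C : Set (Ops (ZMod p))}

private lemma stepC (hC : IsLCC p C) :
    ∀ (μ : ℕ) (e : ℕ →₀ ℕ), ((e.sum fun _ k => k) - e.support.card = μ) →
    (∀ i, e i ≤ p - 1) →
    (∃ n, (∀ i ∈ e.support, i < n + 1) ∧
      (⟨n, inducedOp p n (monomial e 1)⟩ : Ops (ZMod p)) ∈ C) →
    ∀ (d : ℕ), (e.sum fun _ k => k) = d →
    ∀ (m : ℕ) (τ : Fin d → Fin (m + 1)) (c : ZMod p),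
      (⟨m, fun x => c * ∏ j, x (τ j)⟩ : Ops (ZMod p)) ∈ C := by
  classical
  intro μ
  induction μ using Nat.strong_induction_on with
  | _ μ IH =>
  intro e hμ hered hwit d hd m τ c
  obtain ⟨n, hn, hmem⟩ := hwit
  by_cases hsmall : ∀ i, e i ≤ 1
  · -- base case : e is multilinear
    have hone : ∀ i ∈ e.support, e i = 1 := fun i hi =>
      le_antisymm (hsmall i) (Nat.one_le_iff_ne_zero.mpr (Finsupp.mem_support_iff.mp hi))
    have hcard : e.support.card = d := by
      rw [← hd, Finsupp.sum, Finset.sum_congr rfl hone]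
      simp
    let E : {i // i ∈ e.support} ≃ Fin d := e.support.equivFinOfCardEq hcard
    set A : Fin (n + 1) → Fin (m + 1) → ZMod p := fun i' j =>
      if h : i'.val ∈ e.support then (if τ (E ⟨i'.val, h⟩) = j then 1 else 0) else 0 with hA
    have h1 := memScale hC (memL3 hC hmem m A) c
    have heq : (⟨m, fun x => c * ∏ j, x (τ j)⟩ : Ops (ZMod p)) =
        ⟨m, fun x => c * inducedOp p n (monomial e 1) (fun i' => ∑ j, A i' j * x j)⟩ := by
      refine opEq fun x => ?_
      congr 1
      rw [evalMono e hn, one_mul]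
      set y : Fin (n + 1) → ZMod p := fun i' => ∑ j, A i' j * x j with hy
      have hyval : ∀ i' : Fin (n + 1), y i' =
          if h : i'.val ∈ e.support then x (τ (E ⟨i'.val, h⟩)) else 0 := by
        intro i'
        by_cases h : i'.val ∈ e.support
        · rw [dif_pos h]
          have : ∀ j : Fin (m + 1), A i' j * x j =
              if τ (E ⟨i'.val, h⟩) = j then x j else 0 := fun j => by
            rw [hA]; simp only [dif_pos h]
            by_cases hj : τ (E ⟨i'.val, h⟩) = j
            · rw [if_pos hj, if_pos hj, one_mul]
            · rw [if_neg hj, if_neg hj, zero_mul]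
          rw [hy]
          simp only []
          rw [Finset.sum_congr rfl fun j _ => this j,
            Finset.sum_ite_eq Finset.univ (τ (E ⟨i'.val, h⟩)) x, if_pos (mem_univ _)]
        · rw [dif_neg h, hy]
          simp only []
          refine Finset.sum_eq_zero fun j _ => ?_
          rw [hA]; simp only [dif_neg h, zero_mul]
      set g : ℕ → ZMod p := fun i =>
        if h : i ∈ e.support then x (τ (E ⟨i, h⟩)) else 1 with hg
      have hfac : ∀ i' : Fin (n + 1), y i' ^ e i'.val = g i'.val := by
        intro i'
        by_cases h : i'.val ∈ e.support
        · rw [hyval i', dif_pos h, hone _ h, pow_one]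
          simp only [hg]
          rw [dif_pos h]
        · rw [Finsupp.notMem_support_iff.mp h, pow_zero]
          simp only [hg]
          rw [dif_neg h]
      calc ∏ j : Fin d, x (τ j)
          = ∏ a : {i // i ∈ e.support}, x (τ (E a)) :=
            (Equiv.prod_comp E (fun j => x (τ j))).symm
        _ = ∏ a ∈ e.support.attach, g a.val := by
            rw [← Finset.univ_eq_attach]
            refine Finset.prod_congr rfl fun a _ => ?_
            simp only [hg]
            rw [dif_pos a.2]
        _ = ∏ i ∈ e.support, g i := Finset.prod_attach _ _
        _ = ∏ i ∈ Finset.range (n + 1), g i := by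
            refine Finset.prod_subset (fun i hi => Finset.mem_range.mpr (hn i hi)) ?_
            intro i _ hi
            simp only [hg]
            exact dif_neg hi
        _ = ∏ i' : Fin (n + 1), g i'.val :=
            (Fin.prod_univ_eq_prod_range g (n + 1)).symm
        _ = ∏ i' : Fin (n + 1), y i' ^ e i'.val :=
            Finset.prod_congr rfl fun i' _ => (hfac i').symm
    rw [heq]; exact h1
  · -- inductive step: split one variable with exponent ≥ 2
    push_neg at hsmall
    obtain ⟨i₀, hi₀⟩ := hsmall
    set k := e i₀ with hk
    have hk2 : 2 ≤ k := hi₀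
    have hkp : k ≤ p - 1 := hered i₀
    have hp2 : 2 ≤ p := hpF.out.two_le
    have hi₀supp : i₀ ∈ e.support := Finsupp.mem_support_iff.mpr (by omega)
    have hi₀lt : i₀ < n + 1 := hn i₀ hi₀supp
    set er := e.erase i₀ with her
    have herlt : ∀ i ∈ er.support, i < n + 1 := by
      intro i hi
      rw [her, Finsupp.support_erase] at hi
      exact hn i (Finset.mem_of_mem_erase hi)
    have hen1 : e (n + 1) = 0 := by
      by_contra h
      exact absurd (hn (n + 1) (Finsupp.mem_support_iff.mpr h)) (by omega)
    have hern1 : er (n + 1) = 0 := by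
      rw [her, Finsupp.erase_ne (by omega : n + 1 ≠ i₀)]; exact hen1
    have heri₀ : er i₀ = 0 := Finsupp.erase_same
    have heq_e : er + Finsupp.single i₀ k = e := Finsupp.erase_add_single i₀ e
    set e₂ := er + Finsupp.single i₀ (k - 1) + Finsupp.single (n + 1) 1 with he₂
    have he₂app : ∀ i, e₂ i =
        er i + (if i₀ = i then k - 1 else 0) + (if n + 1 = i then 1 else 0) := by
      intro i; rw [he₂]; simp only [Finsupp.add_apply, Finsupp.single_apply]
    have heapp : ∀ i, e i = er i + (if i₀ = i then k else 0) := by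
      intro i; rw [← heq_e]; simp [Finsupp.add_apply, Finsupp.single_apply]
    have herle : ∀ i, er i ≤ e i := by
      intro i
      by_cases h : i₀ = i
      · rw [← h, heri₀]; omega
      · rw [heapp i, if_neg h]; omega
    have he₂red : ∀ i, e₂ i ≤ p - 1 := by
      intro i
      rw [he₂app]
      by_cases h1 : i₀ = i
      · rw [if_pos h1, if_neg (by omega : ¬ n + 1 = i), ← h1, heri₀]; omega
      · rw [if_neg h1]
        by_cases h2 : n + 1 = i
        · rw [if_pos h2, ← h2, hern1]; omega
        · rw [if_neg h2]
          have := herle i; have := hered i; omega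
    have he₂supp : ∀ i ∈ e₂.support, i < n + 2 := by
      intro i hi
      have h := Finsupp.mem_support_iff.mp hi
      rw [he₂app] at h
      by_contra hge
      push_neg at hge
      have h3 : er i = 0 := by
        have h4 : e i = 0 := by
          by_contra hh
          exact absurd (hn i (Finsupp.mem_support_iff.mpr hh)) (by omega)
        have := herle i; omega
      rw [h3, if_neg (by omega : ¬ i₀ = i), if_neg (by omega : ¬ n + 1 = i)] at h
      simp at h
    have hsum_er : (er.sum fun _ k => k) + k = d := by
      rw [← hd, ← heq_e, Finsupp.sum_add_index' (fun _ => rfl) (fun _ _ _ => rfl),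
        Finsupp.sum_single_index rfl]
    have hsum₂ : (e₂.sum fun _ k => k) = d := by
      rw [he₂, Finsupp.sum_add_index' (fun _ => rfl) (fun _ _ _ => rfl),
        Finsupp.sum_add_index' (fun _ => rfl) (fun _ _ _ => rfl),
        Finsupp.sum_single_index rfl, Finsupp.sum_single_index rfl]
      omega
    have hsupp₂eq : e₂.support = insert (n + 1) e.support := by
      ext i
      simp only [Finsupp.mem_support_iff, Finset.mem_insert, he₂app i]
      by_cases h1 : i₀ = i
      · rw [← h1, heri₀, if_pos rfl, if_neg (by omega : ¬ n + 1 = i₀)]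
        constructor
        · intro _; exact Or.inr (by omega)
        · intro _; omega
      · rw [if_neg h1]
        by_cases h2 : n + 1 = i
        · have h3 : er i = 0 := by
            rw [her, Finsupp.erase_ne (fun hh => h1 hh.symm), ← h2]; exact hen1
          rw [if_pos h2, h3]
          constructor
          · intro _; exact Or.inl h2.symm
          · intro _; omega
        · rw [if_neg h2, add_zero, add_zero, her,
            Finsupp.erase_ne (fun hh => h1 hh.symm)]
          constructor
          · intro h; exact Or.inr h
          · rintro (h | h)
            · exact absurd h.symm h2
            · exact h
    have hcard₂ : e₂.support.card = e.support.card + 1 := by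
      rw [hsupp₂eq, Finset.card_insert_of_notMem]
      intro hmem'
      exact absurd (hn _ hmem') (by omega)
    have hdgt : e.support.card < d := by
      rw [← hd, Finsupp.sum]
      calc e.support.card = ∑ _i ∈ e.support, 1 := by rw [Finset.card_eq_sum_ones]
        _ < ∑ i ∈ e.support, e i :=
          Finset.sum_lt_sum
            (fun i hi => Nat.one_le_iff_ne_zero.mpr (Finsupp.mem_support_iff.mp hi))
            ⟨i₀, hi₀supp, by omega⟩
    set u : ℕ → (ℕ →₀ ℕ) :=
      fun m' => er + Finsupp.single i₀ m' + Finsupp.single (n + 1) (k - m') with hu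
    set P₂ : MvPolynomial ℕ (ZMod p) := (X i₀ + X (n + 1)) ^ k * monomial er 1 with hP₂
    have hP₂eq : P₂ =
        ∑ m' ∈ Finset.range (k + 1), monomial (u m') ((k.choose m' : ℕ) : ZMod p) := by
      rw [hP₂, add_pow, Finset.sum_mul]
      refine Finset.sum_congr rfl fun m' _ => ?_
      rw [show ((k.choose m' : ℕ) : MvPolynomial ℕ (ZMod p)) =
        MvPolynomial.C ((k.choose m' : ℕ) : ZMod p) from (map_natCast MvPolynomial.C _).symm]
      rw [X_pow_eq_monomial, X_pow_eq_monomial, monomial_mul, mul_comm _ (MvPolynomial.C _),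
        C_mul_monomial, monomial_mul]
      rw [hu]
      congr 1
      · abel
      · ring
    have hucoeff : ∀ m' i, u m' i =
        er i + (if i₀ = i then m' else 0) + (if n + 1 = i then k - m' else 0) := by
      intro m' i; rw [hu]; simp only [Finsupp.add_apply, Finsupp.single_apply]
    have hui₀ : ∀ m', u m' i₀ = m' := by
      intro m'
      rw [hucoeff, heri₀, if_pos rfl, if_neg (by omega : ¬ n + 1 = i₀)]
      omega
    have he₂i₀ : e₂ i₀ = k - 1 := by
      rw [he₂app, heri₀, if_pos rfl, if_neg (by omega : ¬ n + 1 = i₀)]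
      omega
    have hco : coeff e₂ P₂ = ((k : ℕ) : ZMod p) := by
      rw [hP₂eq, coeff_sum]
      rw [Finset.sum_eq_single_of_mem (k - 1) (Finset.mem_range.mpr (by omega)) ?_]
      · have hueq : u (k - 1) = e₂ := by
          refine Finsupp.ext fun i => ?_
          rw [hucoeff, he₂app]
          split_ifs <;> omega
        rw [coeff_monomial, if_pos hueq]
        have hch : k.choose (k - 1) = k := by
          have h1 : k.choose (k - (k - 1)) = k.choose (k - 1) :=
            Nat.choose_symm (by omega)
          rw [← h1, show k - (k - 1) = 1 from by omega, Nat.choose_one_right]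
        rw [hch]
      · intro m' _ hne
        rw [coeff_monomial, if_neg ?_]
        intro hum
        apply hne
        have h5 := DFunLike.congr_fun hum i₀
        rw [hui₀, he₂i₀] at h5
        exact h5
    have hkcast : ((k : ℕ) : ZMod p) ≠ 0 := by
      rw [Ne, ZMod.natCast_eq_zero_iff]
      intro hdvd
      have := Nat.le_of_dvd (by omega) hdvd
      omega
    have he₂mem : e₂ ∈ P₂.support := mem_support_iff.mpr (by rw [hco]; exact hkcast)
    have hsupP₂ : ∀ dd ∈ P₂.support, ∃ m', m' ≤ k ∧ dd = u m' := by
      intro dd hdd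
      rw [hP₂eq] at hdd
      obtain ⟨m', hm', hdd'⟩ := Finset.mem_biUnion.mp (MvPolynomial.support_sum hdd)
      refine ⟨m', by have := Finset.mem_range.mp hm'; omega, ?_⟩
      have hc' := mem_support_iff.mp hdd'
      rw [coeff_monomial] at hc'
      by_cases h : u m' = dd
      · exact h.symm
      · rw [if_neg h] at hc'; exact absurd rfl hc'
    have hP₂red : IsReducedPoly p P₂ := by
      intro dd hdd i
      obtain ⟨m', hm', rfl⟩ := hsupP₂ dd hdd
      rw [hucoeff]
      by_cases h1 : i₀ = i
      · rw [if_pos h1, if_neg (by omega : ¬ n + 1 = i), ← h1, heri₀]; omega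
      · rw [if_neg h1]
        by_cases h2 : n + 1 = i
        · rw [if_pos h2, ← h2, hern1]; omega
        · rw [if_neg h2]
          have := herle i; have := hered i; omega
    have hP₂vars : ∀ i ∈ P₂.vars, i < (n + 1) + 1 := by
      intro i hi
      obtain ⟨dd, hdd, hidd⟩ := (mem_vars i).mp hi
      obtain ⟨m', hm', rfl⟩ := hsupP₂ dd hdd
      have h := Finsupp.mem_support_iff.mp hidd
      rw [hucoeff] at h
      by_contra hge
      push_neg at hge
      have h3 : er i = 0 := by
        have h4 : e i = 0 := by
          by_contra hh
          exact absurd (hn i (Finsupp.mem_support_iff.mpr hh)) (by omega)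
        have := herle i; omega
      rw [h3, if_neg (by omega : ¬ i₀ = i), if_neg (by omega : ¬ n + 1 = i)] at h
      simp at h
    have hP₂mem : (⟨n + 1, inducedOp p (n + 1) P₂⟩ : Ops (ZMod p)) ∈ C := by
      set A : Fin (n + 1) → Fin (n + 2) → ZMod p := fun i j =>
        (if j.val = i.val then 1 else 0) +
          (if i.val = i₀ ∧ j.val = n + 1 then 1 else 0) with hA
      have h1 := memL3 hC hmem (n + 1) A
      have heq : (⟨n + 1, inducedOp p (n + 1) P₂⟩ : Ops (ZMod p)) =
          ⟨n + 1, fun x => inducedOp p n (monomial e 1) (fun i => ∑ j, A i j * x j)⟩ := by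
        refine opEq fun x => ?_
        set y : Fin (n + 1) → ZMod p := fun i => ∑ j, A i j * x j with hy
        have hyval : ∀ i : Fin (n + 1), y i =
            x ⟨i.val, by omega⟩ + (if i.val = i₀ then x ⟨n + 1, by omega⟩ else 0) := by
          intro i
          have hterm : ∀ j : Fin (n + 2), A i j * x j =
              (if (⟨i.val, by omega⟩ : Fin (n + 2)) = j then x j else 0) +
                (if i.val = i₀ then
                  (if (⟨n + 1, by omega⟩ : Fin (n + 2)) = j then x j else 0) else 0) := by
            intro j
            simp only [hA]
            rw [add_mul]
            congr 1
            · split_ifs <;> rename_i h1 h2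
              · rw [one_mul]
              · exact (h2 (Fin.ext h1.symm)).elim
              · exact (h1 (congrArg Fin.val h2).symm).elim
              · rw [zero_mul]
            · by_cases hii : i.val = i₀
              · simp only [hii, eq_self_iff_true, true_and, if_true]
                split_ifs <;> rename_i h1 h2
                · rw [one_mul]
                · exact (h2 (Fin.ext h1.symm)).elim
                · exact (h1 (congrArg Fin.val h2).symm).elim
                · rw [zero_mul]
              · rw [if_neg (fun hc => hii hc.1), zero_mul, if_neg hii]
          simp only [hy]
          rw [Finset.sum_congr rfl fun j _ => hterm j, Finset.sum_add_distrib]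
          congr 1
          · rw [Finset.sum_ite_eq Finset.univ (⟨i.val, by omega⟩ : Fin (n + 2)) x,
              if_pos (mem_univ _)]
          · by_cases hii : i.val = i₀ <;> simp [hii, Finset.sum_ite_eq]
        rw [inducedOp_def, hP₂, map_mul, map_pow, map_add, eval_X, eval_X,
          liftF_apply x (show i₀ < n + 2 by omega),
          liftF_apply x (show n + 1 < n + 2 by omega)]
        have herlt2 : ∀ i ∈ er.support, i < n + 2 := fun i hi => by
          have := herlt i hi; omega
        have hevm : eval (liftF (n + 1) x) (monomial er (1 : ZMod p)) =
            ∏ i : Fin (n + 2), x i ^ er i.val := by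
          rw [← inducedOp_def, evalMono er herlt2, one_mul]
        rw [hevm]
        have hrhs : inducedOp p n (monomial e 1) y =
            (∏ i : Fin (n + 1), y i ^ er i.val) *
              (x ⟨i₀, by omega⟩ + x ⟨n + 1, by omega⟩) ^ k := by
          rw [evalMono e hn, one_mul]
          have hsplit : ∀ i : Fin (n + 1), y i ^ e i.val =
              y i ^ er i.val * (if (⟨i₀, hi₀lt⟩ : Fin (n + 1)) = i then y i ^ k else 1) := by
            intro i
            rw [heapp i.val]
            by_cases h : i₀ = i.val
            · rw [if_pos h, if_pos (Fin.ext h), pow_add]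
            · rw [if_neg h, add_zero, if_neg (fun hh => h (by rw [← hh])), mul_one]
          rw [Finset.prod_congr rfl fun i _ => hsplit i, Finset.prod_mul_distrib]
          congr 1
          rw [Finset.prod_ite_eq Finset.univ (⟨i₀, hi₀lt⟩ : Fin (n + 1))
            (fun i => y i ^ k), if_pos (mem_univ _)]
          rw [hyval ⟨i₀, hi₀lt⟩]
          simp
        rw [hrhs]
        have hprod : ∏ i : Fin (n + 2), x i ^ er i.val =
            ∏ i : Fin (n + 1), y i ^ er i.val := by
          rw [← prodExt er herlt2 x, ← prodExt er herlt y]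
          refine Finset.prod_congr rfl fun i hi => ?_
          have hilt : i < n + 1 := herlt i hi
          have hine : ¬ (i = i₀) := by
            intro h
            rw [h] at hi
            exact absurd heri₀ (Finsupp.mem_support_iff.mp hi)
          rw [liftF_apply x (by omega : i < n + 2), liftF_apply y hilt,
            hyval ⟨i, hilt⟩]
          simp only []
          rw [if_neg hine, add_zero]
        rw [hprod]
        ring
      rw [heq]; exact h1
    have hmono₂ := stepB hC hP₂red hP₂vars hP₂mem he₂mem
    refine IH ((e₂.sum fun _ k => k) - e₂.support.card) ?_ e₂ rfl he₂red
      ⟨n + 1, fun i hi => by have := he₂supp i hi; omega, hmono₂⟩ d hsum₂ m τ c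
    rw [hsum₂, hcard₂]
    omega

end Aux4
section Aux5

open MvPolynomial Finset

variable {p : ℕ} [hpF : Fact p.Prime]

private lemma reducedRep (n : ℕ) (g : (Fin (n + 1) → ZMod p) → ZMod p) :
    ∃ f : MvPolynomial ℕ (ZMod p), IsReducedPoly p f ∧ (∀ i ∈ f.vars, i < n + 1) ∧
      inducedOp p n f = g := by
  classical
  set f₀ : MvPolynomial (Fin (n + 1)) (ZMod p) :=
    ∑ a : Fin (n + 1) → ZMod p, MvPolynomial.C (g a) * MvPolynomial.indicator a with hf₀
  have hmem : f₀ ∈ restrictDegree (Fin (n + 1)) (ZMod p) (Fintype.card (ZMod p) - 1) := by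
    refine Submodule.sum_mem _ fun a _ => ?_
    rw [← smul_eq_C_mul]
    exact Submodule.smul_mem _ _ (indicator_mem_restrictDegree a)
  have hred0 : ∀ s ∈ f₀.support, ∀ i, s i ≤ p - 1 := by
    have h := (mem_restrictDegree (σ := Fin (n + 1)) f₀ _).mp hmem
    rwa [ZMod.card] at h
  refine ⟨rename Fin.val f₀, ?_, ?_, ?_⟩
  · intro dd hdd i
    rw [support_rename_of_injective Fin.val_injective] at hdd
    obtain ⟨s, hs, rfl⟩ := Finset.mem_image.mp hdd
    by_cases h : i < n + 1
    · rw [show i = Fin.val (⟨i, h⟩ : Fin (n + 1)) from rfl,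
        Finsupp.mapDomain_apply Fin.val_injective]
      exact hred0 s hs _
    · rw [Finsupp.mapDomain_notin_range]
      · omega
      · rintro ⟨a, ha⟩; exact h (ha ▸ a.2)
  · intro i hi
    have h := vars_rename Fin.val f₀ hi
    obtain ⟨a, _, rfl⟩ := Finset.mem_image.mp h
    exact a.2
  · funext x
    rw [inducedOp_def, eval_rename]
    have hco : (liftF n x ∘ Fin.val) = x := by
      funext i
      show liftF n x i.val = x i
      rw [liftF_apply x i.2]
    rw [hco, hf₀, map_sum]
    rw [Finset.sum_eq_single_of_mem x (mem_univ x) ?_]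
    · rw [map_mul, eval_C, eval_indicator_apply_eq_one, mul_one]
    · intro a _ hne
      rw [map_mul, eval_C, eval_indicator_apply_eq_zero x a hne.symm, mul_zero]

private lemma sumOverRange (w : ℕ →₀ ℕ) {t : ℕ} (hw : ∀ i ∈ w.support, i < t) :
    (w.sum fun _ k => k) = ∑ i ∈ Finset.range t, w i := by
  rw [Finsupp.sum]
  exact Finset.sum_subset (fun i hi => Finset.mem_range.mpr (hw i hi))
    (fun i _ hi => Finsupp.notMem_support_iff.mp hi)

end Aux5
open MvPolynomial Finset in
/-- For every linearly closed clonoid `C` on `ZMod p`, there exists a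
`p`-minor subset `M` with `C = 𝒞(M)` (surjectivity of `𝒞`). -/
theorem statement12 (p : ℕ) (hp : p.Prime) (C : Set (Ops (ZMod p))) (hC : IsLCC p C) :
    ∃ M : Set ℕ, IsPMinor p M ∧ C = CM p M := by
  classical
  haveI : Fact p.Prime := ⟨hp⟩
  have hp2 : 2 ≤ p := hp.two_le
  set M : Set ℕ := { d | ∃ (n : ℕ) (f : MvPolynomial ℕ (ZMod p)),
    IsReducedPoly p f ∧ (∀ i ∈ f.vars, i < n + 1) ∧
    (⟨n, inducedOp p n f⟩ : Ops (ZMod p)) ∈ C ∧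
    ∃ e ∈ f.support, (e.sum fun _ k => k) = d } with hM
  have hMmem : ∀ d, d ∈ M ↔ ∃ (n : ℕ) (f : MvPolynomial ℕ (ZMod p)),
      IsReducedPoly p f ∧ (∀ i ∈ f.vars, i < n + 1) ∧
      (⟨n, inducedOp p n f⟩ : Ops (ZMod p)) ∈ C ∧
      ∃ e ∈ f.support, (e.sum fun _ k => k) = d := fun d => by rw [hM]; rfl
  have hkey : ∀ d ∈ M, ∀ (m : ℕ) (τ : Fin d → Fin (m + 1)) (c : ZMod p),
      (⟨m, fun x => c * ∏ j, x (τ j)⟩ : Ops (ZMod p)) ∈ C := by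
    intro d hd m τ c
    obtain ⟨n, f, hfred, hfvars, hfmem, e, hesup, hesum⟩ := (hMmem d).mp hd
    have hmono := stepB hC hfred hfvars hfmem hesup
    have hesupp : ∀ i ∈ e.support, i < n + 1 := fun i hi =>
      hfvars i ((mem_vars i).mpr ⟨e, hesup, hi⟩)
    exact stepC hC _ e rfl (fun i => hfred e hesup i) ⟨n, hesupp, hmono⟩ d hesum m τ c
  refine ⟨M, ?_, ?_⟩
  · -- `M` is a `p`-minor subset
    intro d hd hdgt
    set n' : ℕ := d - p with hn'
    have hd_eq : d - (p - 1) = n' + 1 := by omega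
    have hsingles : ∀ i : ℕ, ((∑ j ∈ Finset.range (n' + 1), Finsupp.single j (1 : ℕ)) i)
        = if i ∈ Finset.range (n' + 1) then 1 else 0 := by
      intro i
      rw [Finset.sum_apply']
      rw [Finset.sum_congr rfl fun j _ => Finsupp.single_apply]
      rw [Finset.sum_ite_eq' (Finset.range (n' + 1)) i (fun _ => 1)]
    set w : ℕ →₀ ℕ :=
      Finsupp.single 0 (p - 1) + ∑ i ∈ Finset.range (n' + 1), Finsupp.single i 1 with hw
    have happ : ∀ i, w i = (if 0 = i then p - 1 else 0) +
        (if i ∈ Finset.range (n' + 1) then 1 else 0) := by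
      intro i
      rw [hw, Finsupp.add_apply, Finsupp.single_apply, hsingles]
    have hwsupp : ∀ i ∈ w.support, i < n' + 1 := by
      intro i hi
      have h := Finsupp.mem_support_iff.mp hi
      rw [happ] at h
      by_contra hge
      push_neg at hge
      rw [if_neg (by omega : ¬ 0 = i), if_neg (by simp only [Finset.mem_range]; omega)] at h
      simp at h
    have hwsum : (w.sum fun _ k => k) = d := by
      rw [sumOverRange w hwsupp, Finset.sum_congr rfl fun i _ => happ i,
        Finset.sum_add_distrib,
        Finset.sum_ite_eq (Finset.range (n' + 1)) 0 (fun _ => p - 1),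
        if_pos (Finset.mem_range.mpr (by omega)),
        Finset.sum_congr rfl fun i hi => if_pos hi,
        Finset.sum_const, Finset.card_range, smul_eq_mul, mul_one]
      omega
    obtain ⟨τ, hτ⟩ := tauExists (p := p) w n' d hwsupp hwsum
    have hop := hkey d hd n' τ 1
    set e'' : ℕ →₀ ℕ := ∑ i ∈ Finset.range (n' + 1), Finsupp.single i 1 with he''
    have he''app : ∀ i, e'' i = if i ∈ Finset.range (n' + 1) then 1 else 0 := by
      intro i; rw [he'']; exact hsingles i
    have he''supp : ∀ i ∈ e''.support, i < n' + 1 := by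
      intro i hi
      have h := Finsupp.mem_support_iff.mp hi
      rw [he''app] at h
      by_contra hge
      push_neg at hge
      rw [if_neg (by simp only [Finset.mem_range]; omega)] at h
      simp at h
    have he''sum : (e''.sum fun _ k => k) = n' + 1 := by
      rw [sumOverRange e'' he''supp, Finset.sum_congr rfl fun i hi => he''app i,
        Finset.sum_congr rfl fun i hi => if_pos hi,
        Finset.sum_const, Finset.card_range, smul_eq_mul, mul_one]
    have hdd_eq : ∀ dd ∈ (monomial e'' (1 : ZMod p)).support, dd = e'' := by
      intro dd hdd
      have hc := mem_support_iff.mp hdd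
      rw [coeff_monomial] at hc
      by_cases h : e'' = dd
      · exact h.symm
      · rw [if_neg h] at hc; exact absurd rfl hc
    have he''mem : e'' ∈ (monomial e'' (1 : ZMod p)).support := by
      rw [mem_support_iff, coeff_monomial, if_pos rfl]
      exact one_ne_zero
    have heqop : (⟨n', fun x => (1 : ZMod p) * ∏ j, x (τ j)⟩ : Ops (ZMod p)) =
        ⟨n', inducedOp p n' (monomial e'' 1)⟩ := by
      refine opEq fun x => ?_
      rw [hτ x, evalMono e'' he''supp]
      congr 1
      refine Finset.prod_congr rfl fun i _ => ?_
      rw [happ, he''app, if_pos (Finset.mem_range.mpr i.2)]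
      by_cases h0 : (0 : ℕ) = i.val
      · rw [if_pos h0, show p - 1 + 1 = p from by omega, ZMod.pow_card, pow_one]
      · rw [if_neg h0, zero_add]
    rw [hd_eq, hMmem]
    refine ⟨n', monomial e'' 1, ?_, ?_, ?_, e'', he''mem, he''sum⟩
    · intro dd hdd i
      rw [hdd_eq dd hdd, he''app]
      split_ifs <;> omega
    · intro i hi
      obtain ⟨dd, hdd, hidd⟩ := (mem_vars i).mp hi
      rw [hdd_eq dd hdd] at hidd
      exact he''supp i hidd
    · rw [← heqop]; exact hop
  · -- `C = CM p M`
    apply Set.Subset.antisymm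
    · rintro ⟨nn, g⟩ hg
      obtain ⟨f, hfred, hfvars, hfeq⟩ := reducedRep nn g
      by_cases hf0 : f = 0
      · have hg0 : g = fun _ => (0 : ZMod p) := by
          funext x
          rw [← congrFun hfeq x, hf0, inducedOp_def, map_zero]
        exact Or.inl ⟨nn, congrArg (Sigma.mk nn) hg0⟩
      · refine Or.inr ⟨nn, f, hf0, hfred, hfvars, ?_, congrArg (Sigma.mk nn) hfeq.symm⟩
        intro e he
        rw [hMmem]
        refine ⟨nn, f, hfred, hfvars, ?_, e, he, rfl⟩
        rw [show (⟨nn, inducedOp p nn f⟩ : Ops (ZMod p)) = ⟨nn, g⟩ from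
          congrArg (Sigma.mk nn) hfeq]
        exact hg
    · intro h hh
      rcases hh with ⟨nn, rfl⟩ | ⟨nn, f, hf0, hfred, hfvars, hdeg, rfl⟩
      · exact memZero hC nn
      · have hmonoC : ∀ e ∈ f.support,
            (⟨nn, inducedOp p nn (monomial e (coeff e f))⟩ : Ops (ZMod p)) ∈ C := by
          intro e he
          have hes : ∀ i ∈ e.support, i < nn + 1 := fun i hi =>
            hfvars i ((mem_vars i).mpr ⟨e, he, hi⟩)
          obtain ⟨τ, hτ⟩ := tauExists (p := p) e nn (e.sum fun _ k => k) hes rfl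
          have hin := hkey _ (hdeg e he) nn τ (coeff e f)
          have heq : (⟨nn, fun x => coeff e f * ∏ j, x (τ j)⟩ : Ops (ZMod p)) =
              ⟨nn, inducedOp p nn (monomial e (coeff e f))⟩ :=
            opEq fun x => by rw [hτ x, evalMono e hes]
          rw [heq] at hin
          exact hin
        have hne : f.support.Nonempty := Finset.nonempty_iff_ne_empty.mpr (fun h => hf0 (support_eq_empty.mp h))
        haveI : Nonempty {e // e ∈ f.support} := ⟨⟨hne.choose, hne.choose_spec⟩⟩
        have hsum := memSum hC (ι := {e // e ∈ f.support}) (fun _ => 1)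
          (fun e => inducedOp p nn (monomial e.val (coeff e.val f)))
          (fun e => hmonoC e.val e.2)
        have heq : (⟨nn, inducedOp p nn f⟩ : Ops (ZMod p)) =
            ⟨nn, fun x => ∑ e : {e // e ∈ f.support},
              1 * inducedOp p nn (monomial e.val (coeff e.val f)) x⟩ := by
          refine opEq fun x => ?_
          rw [inducedOp_def]
          calc eval (liftF nn x) f
              = ∑ e ∈ f.support, eval (liftF nn x) (monomial e (coeff e f)) := by
                conv_lhs => rw [← support_sum_monomial_coeff f]
                rw [map_sum]
            _ = ∑ e : {e // e ∈ f.support},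
                1 * inducedOp p nn (monomial e.val (coeff e.val f)) x := by
                rw [← Finset.sum_attach f.support
                  (fun e => eval (liftF nn x) (monomial e (coeff e f))),
                  Finset.univ_eq_attach]
                exact Finset.sum_congr rfl fun a _ => by rw [one_mul, inducedOp_def]
        rw [heq]
        exact hsum
end

section
/- Let p be a prime and let C be a clone on Z_p which contains +. Assume that C is not contained in Aff(Z_p) and that some operation of C does not preserve the unary relation {0} (i.e., there is f ∈ C with f(0,…,0) ≠ 0). Then C contains all finitary operations on Z_p. -/
section Statement16Proof

variable {p : ℕ} {C : Set (Ops (ZMod p))}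

private lemma compC (hC : IsClone C) {n m : ℕ} {F : (Fin (n+1) → ZMod p) → ZMod p}
    (hF : (⟨n, F⟩ : Ops (ZMod p)) ∈ C)
    {g : Fin (n+1) → (Fin (m+1) → ZMod p) → ZMod p}
    (hg : ∀ i, (⟨m, g i⟩ : Ops (ZMod p)) ∈ C) :
    (⟨m, fun x => F fun i => g i x⟩ : Ops (ZMod p)) ∈ C :=
  hC.2 ⟨n, m, F, g, hF, hg, rfl⟩

private lemma mem_congr {m : ℕ} {f g : (Fin (m+1) → ZMod p) → ZMod p}
    (hf : (⟨m, f⟩ : Ops (ZMod p)) ∈ C) (h : ∀ x, f x = g x) :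
    (⟨m, g⟩ : Ops (ZMod p)) ∈ C := by
  obtain rfl : f = g := funext h
  exact hf

private lemma pair_mem {m : ℕ} {A B : (Fin (m+1) → ZMod p) → ZMod p}
    (hA : (⟨m, A⟩ : Ops (ZMod p)) ∈ C) (hB : (⟨m, B⟩ : Ops (ZMod p)) ∈ C) :
    ∀ i : Fin 2, (⟨m, ![A, B] i⟩ : Ops (ZMod p)) ∈ C := by
  intro i
  fin_cases i
  · exact hA
  · exact hB

private lemma addC (hC : IsClone C) (hplus : plusOp (ZMod p) ∈ C) {m : ℕ}
    {f g : (Fin (m+1) → ZMod p) → ZMod p}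
    (hf : (⟨m, f⟩ : Ops (ZMod p)) ∈ C) (hg : (⟨m, g⟩ : Ops (ZMod p)) ∈ C) :
    (⟨m, fun x => f x + g x⟩ : Ops (ZMod p)) ∈ C := by
  have h := compC hC hplus (pair_mem hf hg)
  exact mem_congr h (fun x => by simp [plusOp])

private lemma scalOp (hC : IsClone C) (hplus : plusOp (ZMod p) ∈ C) [NeZero p] (k : ZMod p) :
    (⟨0, fun x => k * x 0⟩ : Ops (ZMod p)) ∈ C := by
  have base : ∀ n : ℕ, (⟨0, fun x => ((n+1 : ℕ) : ZMod p) * x 0⟩ : Ops (ZMod p)) ∈ C := by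
    intro n
    induction n with
    | zero => exact mem_congr (hC.1 0 0) (fun x => by push_cast; ring)
    | succ n ih =>
      exact mem_congr (addC hC hplus ih (hC.1 0 0)) (fun x => by push_cast; ring)
  have hk : ∃ n : ℕ, ((n+1 : ℕ) : ZMod p) = k := by
    have hp1 : 1 ≤ p := Nat.one_le_iff_ne_zero.mpr (NeZero.ne p)
    refine ⟨k.val + p - 1, ?_⟩
    have he : k.val + p - 1 + 1 = k.val + p := by omega
    rw [he]
    push_cast [ZMod.natCast_self]
    simpa using ZMod.natCast_rightInverse k
  obtain ⟨n, hn⟩ := hk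
  exact mem_congr (base n) (fun x => by rw [hn])

private lemma scaleC (hC : IsClone C) (hplus : plusOp (ZMod p) ∈ C) [NeZero p] (k : ZMod p)
    {m : ℕ} {f : (Fin (m+1) → ZMod p) → ZMod p} (hf : (⟨m, f⟩ : Ops (ZMod p)) ∈ C) :
    (⟨m, fun x => k * f x⟩ : Ops (ZMod p)) ∈ C :=
  mem_congr (compC hC (scalOp hC hplus k) (g := fun _ => f) (fun _ => hf)) (fun _ => rfl)

private lemma zeroC (hC : IsClone C) (hplus : plusOp (ZMod p) ∈ C) [NeZero p] (m : ℕ) :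
    (⟨m, fun _ => (0 : ZMod p)⟩ : Ops (ZMod p)) ∈ C :=
  mem_congr (scaleC hC hplus 0 (hC.1 m 0)) (fun x => by simp)

private lemma constC (hC : IsClone C) (hplus : plusOp (ZMod p) ∈ C) [Fact p.Prime]
    {n : ℕ} {F : (Fin (n+1) → ZMod p) → ZMod p} (hF : (⟨n, F⟩ : Ops (ZMod p)) ∈ C)
    (hF0 : F (fun _ => 0) ≠ 0) (m : ℕ) (b : ZMod p) :
    (⟨m, fun _ => b⟩ : Ops (ZMod p)) ∈ C := by
  have hc : (⟨m, fun _ => F (fun _ => 0)⟩ : Ops (ZMod p)) ∈ C :=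
    mem_congr (compC hC hF (fun _ => zeroC hC hplus m)) (fun x => rfl)
  have h2 := scaleC hC hplus (b * (F (fun _ => 0))⁻¹) hc
  exact mem_congr h2 (fun x => by field_simp)

private lemma affC (hC : IsClone C) (hplus : plusOp (ZMod p) ∈ C) [Fact p.Prime]
    (hconst : ∀ (m : ℕ) (b : ZMod p), (⟨m, fun _ => b⟩ : Ops (ZMod p)) ∈ C)
    (m : ℕ) (c : ZMod p) (a : Fin (m+1) → ZMod p) :
    (⟨m, fun x => c + ∑ i, a i * x i⟩ : Ops (ZMod p)) ∈ C := by
  classical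
  have key : ∀ s : Finset (Fin (m+1)),
      (⟨m, fun x => c + ∑ i ∈ s, a i * x i⟩ : Ops (ZMod p)) ∈ C := by
    intro s
    induction s using Finset.induction_on with
    | empty => exact mem_congr (hconst m c) (fun x => by simp)
    | @insert j s hj ih =>
      have hterm : (⟨m, fun x => a j * x j⟩ : Ops (ZMod p)) ∈ C := scaleC hC hplus _ (hC.1 m j)
      exact mem_congr (addC hC hplus hterm ih)
        (fun x => by rw [Finset.sum_insert hj]; ring)
  exact key Finset.univ

end Statement16Proof
section Statement16Proof2

variable {p : ℕ} {C : Set (Ops (ZMod p))}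

/-- membership of a binary operation, in curried form -/
private def Mem2 (C : Set (Ops (ZMod p))) (f : ZMod p → ZMod p → ZMod p) : Prop :=
  (⟨1, fun x => f (x 0) (x 1)⟩ : Ops (ZMod p)) ∈ C

private lemma mem2_congr {f g : ZMod p → ZMod p → ZMod p} (hf : Mem2 C f)
    (h : ∀ x y, f x y = g x y) : Mem2 C g := by
  have : f = g := funext fun x => funext fun y => h x y
  rwa [this] at hf

private lemma mem2_add (hC : IsClone C) (hplus : plusOp (ZMod p) ∈ C)
    {f g : ZMod p → ZMod p → ZMod p} (hf : Mem2 C f) (hg : Mem2 C g) :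
    Mem2 C (fun x y => f x y + g x y) :=
  addC hC hplus hf hg

private lemma mem2_scale (hC : IsClone C) (hplus : plusOp (ZMod p) ∈ C) [NeZero p]
    (k : ZMod p) {f : ZMod p → ZMod p → ZMod p} (hf : Mem2 C f) :
    Mem2 C (fun x y => k * f x y) :=
  scaleC hC hplus k hf

private lemma mem2_sub (hC : IsClone C) (hplus : plusOp (ZMod p) ∈ C) [NeZero p]
    {f g : ZMod p → ZMod p → ZMod p} (hf : Mem2 C f) (hg : Mem2 C g) :
    Mem2 C (fun x y => f x y - g x y) := by
  have h := mem2_add hC hplus hf (mem2_scale hC hplus (-1) hg)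
  exact mem2_congr h (fun x y => by ring)

private lemma mem2_of_comp (hC : IsClone C) (hplus : plusOp (ZMod p) ∈ C) [Fact p.Prime]
    (hconst : ∀ (m : ℕ) (b : ZMod p), (⟨m, fun _ => b⟩ : Ops (ZMod p)) ∈ C)
    {n : ℕ} {F : (Fin (n+1) → ZMod p) → ZMod p} (hF : (⟨n, F⟩ : Ops (ZMod p)) ∈ C)
    (c a b : Fin (n+1) → ZMod p) :
    Mem2 C (fun s t => F (fun i => c i + a i * s + b i * t)) := by
  have hg : ∀ i, (⟨1, fun v => c i + a i * v 0 + b i * v 1⟩ : Ops (ZMod p)) ∈ C := by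
    intro i
    exact mem_congr (affC hC hplus hconst 1 (c i) ![a i, b i])
      (fun v => by simp [Fin.sum_univ_two, add_assoc])
  exact compC hC hF hg

private lemma mem2_subst (hC : IsClone C) (hplus : plusOp (ZMod p) ∈ C) [Fact p.Prime]
    (hconst : ∀ (m : ℕ) (b : ZMod p), (⟨m, fun _ => b⟩ : Ops (ZMod p)) ∈ C)
    {f : ZMod p → ZMod p → ZMod p} (h2 : Mem2 C f)
    (c₁ a₁ b₁ c₂ a₂ b₂ : ZMod p) :
    Mem2 C (fun x y => f (c₁ + a₁*x + b₁*y) (c₂ + a₂*x + b₂*y)) := by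
  have hA : (⟨1, fun v : Fin 2 → ZMod p => c₁ + a₁ * v 0 + b₁ * v 1⟩ : Ops (ZMod p)) ∈ C :=
    mem_congr (affC hC hplus hconst 1 c₁ ![a₁, b₁])
      (fun v => by simp [Fin.sum_univ_two, add_assoc])
  have hB : (⟨1, fun v : Fin 2 → ZMod p => c₂ + a₂ * v 0 + b₂ * v 1⟩ : Ops (ZMod p)) ∈ C :=
    mem_congr (affC hC hplus hconst 1 c₂ ![a₂, b₂])
      (fun v => by simp [Fin.sum_univ_two, add_assoc])
  have hg := pair_mem hA hB
  have h := compC hC h2 hg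
  exact mem_congr h (fun v => by simp)

private lemma mem2_shift1 (hC : IsClone C) (hplus : plusOp (ZMod p) ∈ C) [Fact p.Prime]
    (hconst : ∀ (m : ℕ) (b : ZMod p), (⟨m, fun _ => b⟩ : Ops (ZMod p)) ∈ C)
    {f : ZMod p → ZMod p → ZMod p} (h2 : Mem2 C f) :
    Mem2 C (fun x y => f (x + 1) y) := by
  have h := mem2_subst hC hplus hconst h2 1 1 0 0 0 1
  exact mem2_congr h (fun x y => by ring_nf)

private lemma mem2_shift2 (hC : IsClone C) (hplus : plusOp (ZMod p) ∈ C) [Fact p.Prime]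
    (hconst : ∀ (m : ℕ) (b : ZMod p), (⟨m, fun _ => b⟩ : Ops (ZMod p)) ∈ C)
    {f : ZMod p → ZMod p → ZMod p} (h2 : Mem2 C f) :
    Mem2 C (fun x y => f x (y + 1)) := by
  have h := mem2_subst hC hplus hconst h2 0 1 0 1 0 1
  exact mem2_congr h (fun x y => by ring_nf)

private lemma mem2_const1 (hC : IsClone C) (hplus : plusOp (ZMod p) ∈ C) [Fact p.Prime]
    (hconst : ∀ (m : ℕ) (b : ZMod p), (⟨m, fun _ => b⟩ : Ops (ZMod p)) ∈ C)
    (k : ZMod p) {f : ZMod p → ZMod p → ZMod p} (h2 : Mem2 C f) :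
    Mem2 C (fun _ y => f k y) := by
  have h := mem2_subst hC hplus hconst h2 k 0 0 0 0 1
  exact mem2_congr h (fun x y => by ring_nf)

private lemma mem2_const2 (hC : IsClone C) (hplus : plusOp (ZMod p) ∈ C) [Fact p.Prime]
    (hconst : ∀ (m : ℕ) (b : ZMod p), (⟨m, fun _ => b⟩ : Ops (ZMod p)) ∈ C)
    (k : ZMod p) {f : ZMod p → ZMod p → ZMod p} (h2 : Mem2 C f) :
    Mem2 C (fun x _ => f x k) := by
  have h := mem2_subst hC hplus hconst h2 0 1 0 k 0 0
  exact mem2_congr h (fun x y => by ring_nf)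

end Statement16Proof2
section Statement16Proof3

variable {p : ℕ}

/-- the finite-difference operator in the (outer) variable -/
private def Dg {β : Type} [AddCommGroup β] (q : ZMod p → β) : ZMod p → β :=
  fun y => q (y + 1) - q y

/-- induction over `ZMod p` via natural number representatives -/
private lemma zmod_ind [NeZero p] (P : ZMod p → Prop) (h0 : P 0)
    (hs : ∀ x, P x → P (x + 1)) : ∀ x, P x := by
  have key : ∀ n : ℕ, P (n : ZMod p) := by
    intro n
    induction n with
    | zero => simpa using h0
    | succ n ih => push_cast; exact hs _ ih
  intro x
  have := key x.val
  rwa [ZMod.natCast_rightInverse x] at this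

private lemma Dg_iterate_p [Fact p.Prime] (β : Type) [AddCommGroup β]
    [Module (ZMod p) β] [Nontrivial β] (g : ZMod p → β) :
    (Dg (p := p) (β := β))^[p] g = 0 := by
  classical
  let E := ZMod p → β
  let σ : AddMonoid.End E := AddMonoidHom.mk' (fun q => fun y => q (y + 1)) (fun a b => rfl)
  haveI : CharP (AddMonoid.End E) p := by
    constructor
    intro n
    constructor
    · intro h
      by_contra hnd
      have hnz : (n : ZMod p) ≠ 0 := by
        intro h0
        exact hnd ((ZMod.natCast_eq_zero_iff n p).mp h0)
      obtain ⟨u, w, huw⟩ := exists_pair_ne β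
      have hvy : ∀ v : β, n • v = 0 := by
        intro v
        have := congrFun (congrArg (fun φ : AddMonoid.End E => φ (fun _ => v)) h) 0
        rw [AddMonoid.End.natCast_apply] at this
        exact this
      have : ∀ v : β, v = 0 := by
        intro v
        have h1 : (n : ZMod p) • v = 0 := by
          rw [Nat.cast_smul_eq_nsmul]; exact hvy v
        have := congrArg (fun z => ((n : ZMod p))⁻¹ • z) h1
        simpa [smul_smul, inv_mul_cancel₀ hnz] using this
      exact huw (by rw [this u, this w])
    · rintro ⟨k, rfl⟩
      refine AddMonoid.End.ext (h := fun q => funext fun y => ?_)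
      have h1 : ((p * k : ℕ) : AddMonoid.End E) q = (p * k : ℕ) • q := by
        rw [AddMonoid.End.natCast_apply]
      rw [h1]
      have : ((p * k : ℕ) : ZMod p) = 0 := by push_cast [ZMod.natCast_self]; ring
      simp [Pi.smul_apply, ← Nat.cast_smul_eq_nsmul (ZMod p), this]
  have hσ : ∀ (k : ℕ) (q : E) (y : ZMod p), (σ ^ k) q y = q (y + k) := by
    intro k
    induction k with
    | zero => intro q y; simp
    | succ k ih =>
      intro q y
      rw [pow_succ']
      have : (σ * σ ^ k) q = σ ((σ ^ k) q) := rfl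
      rw [this]
      show ((σ ^ k) q) (y + 1) = q (y + (k + 1 : ℕ))
      rw [ih]
      push_cast
      congr 1; ring
  have hσp : σ ^ p = 1 := by
    refine AddMonoid.End.ext (h := fun q => funext fun y => ?_)
    rw [hσ p q y]
    simp only [ZMod.natCast_self, add_zero]
    rfl
  have hbridge : ∀ (k : ℕ) (q : E), ((σ - 1) ^ k) q = (Dg (p := p) (β := β))^[k] q := by
    intro k
    induction k with
    | zero => intro q; simp
    | succ k ih =>
      intro q
      rw [pow_succ', Function.iterate_succ_apply]
      have h1 : ((σ - 1) * (σ - 1) ^ k) q = (σ - 1) (((σ - 1) ^ k) q) := rfl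
      rw [h1, ih]
      have h2 : ∀ r : E, (σ - 1) r = Dg r := by
        intro r
        funext y
        show σ r y - r y = _
        rfl
      rw [h2]
      exact (Function.iterate_succ_apply' Dg k q).symm.trans (Function.iterate_succ_apply Dg k q)
  have hnil : (σ - 1) ^ p = 0 := by
    rw [sub_pow_char_of_commute _ (Commute.one_right σ), hσp, one_pow, sub_self]
  have hfin := hbridge p g
  rw [hnil] at hfin
  simpa using hfin.symm

end Statement16Proof3
section Statement16Proof4

variable {p : ℕ} {C : Set (Ops (ZMod p))}

private lemma telescope1 [NeZero p] {q : ZMod p → ZMod p} (h : ∀ y, q (y + 1) = q y) :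
    ∀ y, q y = q 0 :=
  zmod_ind (fun y => q y = q 0) rfl (fun x hx => by show q (x + 1) = q 0; rw [h x]; exact hx)

private lemma telescope_lin [NeZero p] {q : ZMod p → ZMod p} {c : ZMod p}
    (h : ∀ y, q (y + 1) - q y = c) (h0 : q 0 = 0) : ∀ y, q y = c * y := by
  refine zmod_ind (fun y => q y = c * y) (by simpa using h0) (fun x hx => ?_)
  have h2 : q (x + 1) = q x + c := by linear_combination h x
  show q (x + 1) = c * (x + 1)
  rw [h2, hx]; ring

private lemma telescope2 [NeZero p] {m : ZMod p → ZMod p → ZMod p} {q : ZMod p → ZMod p}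
    (h : ∀ x y, m (x + 1) y - m x y = q y) (h0 : ∀ y, m 0 y = 0) :
    ∀ x y, m x y = x * q y := by
  refine zmod_ind (fun x => ∀ y, m x y = x * q y) (fun y => by simpa using h0 y)
    (fun x hx y => ?_)
  have h2 : m (x + 1) y = m x y + q y := by linear_combination h x y
  show m (x + 1) y = (x + 1) * q y
  rw [h2, hx y]; ring

private lemma lemB [Fact p.Prime] (hC : IsClone C) (hplus : plusOp (ZMod p) ∈ C)
    (hconst : ∀ (m : ℕ) (b : ZMod p), (⟨m, fun _ => b⟩ : Ops (ZMod p)) ∈ C) :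
    ∀ (d : ℕ) (q : ZMod p → ZMod p), Mem2 C (fun x y => x * q y) → q 0 = 0 → q ≠ 0 →
      Dg^[d+1] q = 0 → Mem2 C (fun x y => x * y) := by
  intro d
  induction d with
  | zero =>
    intro q hm h0 hne hD
    exfalso; apply hne
    funext y
    have hstep : ∀ y, q (y + 1) = q y := by
      intro y
      have h1 : q (y + 1) - q y = 0 := by
        have := congrFun hD y
        simpa [Dg] using this
      linear_combination h1
    rw [telescope1 hstep y, h0]; simp
  | succ d ih =>
    intro q hm h0 hne hD
    set q' : ZMod p → ZMod p := fun y => q (y + 1) - q y - q 1 with hq'def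
    by_cases hq' : q' = 0
    · have hc : ∀ y, q (y + 1) - q y = q 1 := by
        intro y
        have := congrFun hq' y
        simp only [hq'def, Pi.zero_apply] at this
        linear_combination this
      have hq : ∀ y, q y = q 1 * y := telescope_lin hc h0
      have h1 : q 1 ≠ 0 := by
        intro h
        apply hne; funext y; rw [hq y, h, zero_mul]; simp
      have hsc := mem2_scale hC hplus (q 1)⁻¹ hm
      refine mem2_congr hsc fun x y => ?_
      rw [hq y]
      field_simp
    · have hDq' : Dg q' = Dg (Dg q) := by
        funext y
        show q' (y + 1) - q' y = Dg q (y + 1) - Dg q y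
        simp only [hq'def, Dg]
        ring
      have hm1 : Mem2 C (fun x y => x * q (y + 1)) :=
        mem2_congr (mem2_shift2 hC hplus hconst hm) (fun x y => rfl)
      have hm2 : Mem2 C (fun x _ => x * q 1) :=
        mem2_congr (mem2_const2 hC hplus hconst 1 hm) (fun x y => rfl)
      have hmem : Mem2 C (fun x y => x * q' y) := by
        refine mem2_congr (mem2_sub hC hplus (mem2_sub hC hplus hm1 hm) hm2)
          (fun x y => ?_)
        simp only [hq'def]; ring
      have hq'0 : q' 0 = 0 := by simp only [hq'def, h0]; ring
      have hDfin : Dg^[d+1] q' = 0 := by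
        rw [Function.iterate_succ_apply, hDq']
        have e1 : Dg^[d] (Dg (Dg q)) = Dg^[d+1+1] q := by
          rw [Function.iterate_succ_apply, Function.iterate_succ_apply]
        rw [e1, hD]
      exact ih q' hmem hq'0 hq' hDfin

private lemma lemA [Fact p.Prime] (hC : IsClone C) (hplus : plusOp (ZMod p) ∈ C)
    (hconst : ∀ (m : ℕ) (b : ZMod p), (⟨m, fun _ => b⟩ : Ops (ZMod p)) ∈ C) :
    ∀ (d : ℕ) (m : ZMod p → ZMod p → ZMod p), Mem2 C m → (∀ x, m x 0 = 0) →
      (∀ y, m 0 y = 0) → m ≠ 0 → Dg^[d+1] m = 0 → Mem2 C (fun x y => x * y) := by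
  have hDg2 : ∀ (m : ZMod p → ZMod p → ZMod p) (x y : ZMod p),
      Dg m x y = m (x + 1) y - m x y := fun _ _ _ => rfl
  intro d
  induction d with
  | zero =>
    intro m hm hx0 h0y hne hD
    exfalso; apply hne
    have key : ∀ x y, m x y = 0 := by
      refine zmod_ind (fun x => ∀ y, m x y = 0) h0y (fun x hx y => ?_)
      have h1 : m (x + 1) y - m x y = 0 := by
        have := congrFun (congrFun hD x) y
        simpa [hDg2] using this
      have h2 : m (x + 1) y = m x y := by linear_combination h1
      rw [h2, hx y]
    funext x y
    rw [key x y]; simp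
  | succ d ih =>
    intro m hm hx0 h0y hne hD
    set m' : ZMod p → ZMod p → ZMod p := fun x y => m (x + 1) y - m x y - m 1 y with hm'def
    by_cases hm' : m' = 0
    · set q : ZMod p → ZMod p := fun y => m 1 y with hqdef
      have hstep : ∀ x y, m (x + 1) y - m x y = q y := by
        intro x y
        have := congrFun (congrFun hm' x) y
        simp only [hm'def, Pi.zero_apply] at this
        linear_combination this
      have hq : ∀ x y, m x y = x * q y := telescope2 hstep h0y
      have hq0 : q 0 = 0 := hx0 1
      have hqne : q ≠ 0 := by
        intro h
        apply hne
        funext x y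
        rw [hq x y, h]
        simp
      have hmem : Mem2 C (fun x y => x * q y) := mem2_congr hm hq
      have hp1 : 1 ≤ p := (Fact.out : p.Prime).one_lt.le
      refine lemB hC hplus hconst (p - 1) q hmem hq0 hqne ?_
      have : p - 1 + 1 = p := Nat.sub_add_cancel hp1
      rw [this]
      haveI : Nontrivial (ZMod p) := inferInstance
      exact Dg_iterate_p (ZMod p) q
    · have hDm' : Dg m' = Dg (Dg m) := by
        funext x y
        show m' (x + 1) y - m' x y = Dg m (x + 1) y - Dg m x y
        simp only [hm'def, hDg2]
        ring
      have hmm1 : Mem2 C (fun x y => m (x + 1) y) :=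
        mem2_congr (mem2_shift1 hC hplus hconst hm) (fun x y => rfl)
      have hmm2 : Mem2 C (fun _ y => m 1 y) :=
        mem2_congr (mem2_const1 hC hplus hconst 1 hm) (fun x y => rfl)
      have hmem : Mem2 C m' := by
        refine mem2_congr (mem2_sub hC hplus (mem2_sub hC hplus hmm1 hm) hmm2)
          (fun x y => ?_)
        simp only [hm'def]
      have hx0' : ∀ x, m' x 0 = 0 := by
        intro x; simp only [hm'def, hx0]; ring
      have h0y' : ∀ y, m' 0 y = 0 := by
        intro y; simp only [hm'def]; rw [h0y y]; ring_nf
      have hDfin : Dg^[d+1] m' = 0 := by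
        rw [Function.iterate_succ_apply, hDm']
        have e1 : Dg^[d] (Dg (Dg m)) = Dg^[d+1+1] m := by
          rw [Function.iterate_succ_apply, Function.iterate_succ_apply]
        rw [e1, hD]
      exact ih m' hmem hx0' h0y' hm' hDfin

end Statement16Proof4
section Statement16Proof5

variable {p : ℕ} {C : Set (Ops (ZMod p))}

private lemma unary_hom_linear [NeZero p] (φ : ZMod p →+ ZMod p) (t : ZMod p) :
    φ t = t * φ 1 := by
  have ht : ((t.val : ℕ) : ZMod p) = t := ZMod.natCast_rightInverse t
  rw [← ht]
  calc φ ((t.val : ℕ) : ZMod p) = φ ((t.val : ℕ) • (1 : ZMod p)) := by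
        norm_num [nsmul_eq_mul]
    _ = (t.val : ℕ) • φ 1 := map_nsmul φ _ _
    _ = ((t.val : ℕ) : ZMod p) * φ 1 := nsmul_eq_mul _ _

private lemma exists_m (hC : IsClone C) (hplus : plusOp (ZMod p) ∈ C) [Fact p.Prime]
    (hconst : ∀ (m : ℕ) (b : ZMod p), (⟨m, fun _ => b⟩ : Ops (ZMod p)) ∈ C)
    (haff : ¬ C ⊆ AffOps p) :
    ∃ m : ZMod p → ZMod p → ZMod p,
      Mem2 C m ∧ (∀ x, m x 0 = 0) ∧ (∀ y, m 0 y = 0) ∧ m ≠ 0 := by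
  classical
  obtain ⟨h, hhC, hha⟩ := Set.not_subset.mp haff
  obtain ⟨n, F⟩ := h
  set x0 : Fin (n+1) → ZMod p := fun _ => 0 with hx0def
  have key : ∃ u a b : Fin (n+1) → ZMod p,
      F (fun i => a i + u i) - F a ≠ F (fun i => b i + u i) - F b := by
    by_contra hcon
    push_neg at hcon
    apply hha
    have hadd : ∀ x y : Fin (n+1) → ZMod p, F (x + y) - F x0 =
        (F x - F x0) + (F y - F x0) := by
      intro x y
      have h1 := hcon y x x0
      have e1 : (fun i => x i + y i) = x + y := rfl
      have e2 : (fun i => x0 i + y i) = y := funext fun i => zero_add (y i)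
      rw [e1, e2] at h1
      linear_combination h1
    set G : (Fin (n+1) → ZMod p) →+ ZMod p :=
      AddMonoidHom.mk' (fun x => F x - F x0) (fun x y => hadd x y) with hGdef
    have hGapp : ∀ x, G x = F x - F x0 := fun x => rfl
    have hGx : ∀ x : Fin (n+1) → ZMod p,
        G x = ∑ i, x i * G (Pi.single i 1) := by
      intro x
      have h2 : G x = G (∑ i, Pi.single i (x i)) := by
        rw [Finset.univ_sum_single]
      rw [h2, map_sum]
      refine Finset.sum_congr rfl fun i _ => ?_
      have h3 := unary_hom_linear (G.comp (AddMonoidHom.single (fun _ => ZMod p) i)) (x i)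
      simpa using h3
    refine ⟨n, F x0, fun i => G (Pi.single i 1), ?_⟩
    have hfun : F = fun x => F x0 + ∑ i, (fun i => G (Pi.single i 1)) i * x i := by
      funext x
      have h4 := hGx x
      rw [hGapp] at h4
      have h5 : ∑ i, x i * G (Pi.single i 1) = ∑ i, G (Pi.single i 1) * x i :=
        Finset.sum_congr rfl fun i _ => mul_comm _ _
      simp only
      linear_combination h4 + h5
    exact congrArg (Sigma.mk n) hfun
  obtain ⟨u, a, b, hub⟩ := key
  set h2 : ZMod p → ZMod p → ZMod p :=
    fun s t => F (fun i => a i + (b i - a i) * s + u i * t) with hh2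
  have hmem : Mem2 C h2 := mem2_of_comp hC hplus hconst hhC a (fun i => b i - a i) u
  have e00 : h2 0 0 = F a := by
    simp only [hh2]; congr 1; funext i; ring
  have e01 : h2 0 1 = F (fun i => a i + u i) := by
    simp only [hh2]; congr 1; funext i; ring
  have e10 : h2 1 0 = F b := by
    simp only [hh2]; congr 1; funext i; ring
  have e11 : h2 1 1 = F (fun i => b i + u i) := by
    simp only [hh2]; congr 1; funext i; ring
  refine ⟨fun x y => h2 x y - h2 x 0 - h2 0 y + h2 0 0, ?_, ?_, ?_, ?_⟩
  · have hcst : Mem2 C (fun _ _ : ZMod p => h2 0 0) := hconst 1 (h2 0 0)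
    have t1 := mem2_sub hC hplus hmem (mem2_const2 hC hplus hconst 0 hmem)
    have t2 := mem2_sub hC hplus t1 (mem2_const1 hC hplus hconst 0 hmem)
    have t3 := mem2_add hC hplus t2 hcst
    exact mem2_congr t3 fun x y => rfl
  · intro x; ring
  · intro y; ring
  · intro hzero
    apply hub
    have h5 := congrFun (congrFun hzero 1) 1
    simp only [Pi.zero_apply] at h5
    rw [e11, e10, e01, e00] at h5
    linear_combination -h5

private lemma mulC (hC : IsClone C) (hplus : plusOp (ZMod p) ∈ C) [Fact p.Prime]
    (hconst : ∀ (m : ℕ) (b : ZMod p), (⟨m, fun _ => b⟩ : Ops (ZMod p)) ∈ C)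
    (haff : ¬ C ⊆ AffOps p) :
    (⟨1, fun x : Fin 2 → ZMod p => x 0 * x 1⟩ : Ops (ZMod p)) ∈ C := by
  obtain ⟨m, hm, hx0, h0y, hne⟩ := exists_m hC hplus hconst haff
  haveI : Nontrivial (ZMod p → ZMod p) :=
    ⟨⟨fun _ => 0, fun _ => 1, fun h => one_ne_zero (congrFun h 0).symm⟩⟩
  have hp1 : 1 ≤ p := (Fact.out : p.Prime).one_lt.le
  have hD : Dg^[(p-1)+1] m = 0 := by
    rw [Nat.sub_add_cancel hp1]
    exact Dg_iterate_p (ZMod p → ZMod p) m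
  exact lemA hC hplus hconst (p-1) m hm hx0 h0y hne hD

end Statement16Proof5
section Statement16Proof6

variable {p : ℕ} {C : Set (Ops (ZMod p))}

private lemma allOps (hC : IsClone C) (hplus : plusOp (ZMod p) ∈ C) [Fact p.Prime]
    (hconst : ∀ (m : ℕ) (b : ZMod p), (⟨m, fun _ => b⟩ : Ops (ZMod p)) ∈ C)
    (hmul : (⟨1, fun x : Fin 2 → ZMod p => x 0 * x 1⟩ : Ops (ZMod p)) ∈ C)
    (m : ℕ) (f : (Fin (m+1) → ZMod p) → ZMod p) : (⟨m, f⟩ : Ops (ZMod p)) ∈ C := by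
  classical
  have hmul2 : ∀ {g h : (Fin (m+1) → ZMod p) → ZMod p},
      (⟨m, g⟩ : Ops (ZMod p)) ∈ C → (⟨m, h⟩ : Ops (ZMod p)) ∈ C →
      (⟨m, fun x => g x * h x⟩ : Ops (ZMod p)) ∈ C := by
    intro g h hg hh
    exact mem_congr (compC hC hmul (pair_mem hg hh)) (fun x => by simp)
  have hsum : ∀ {ι : Type} [DecidableEq ι] (s : Finset ι)
      (G : ι → (Fin (m+1) → ZMod p) → ZMod p),
      (∀ i ∈ s, (⟨m, G i⟩ : Ops (ZMod p)) ∈ C) →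
      (⟨m, fun x => ∑ i ∈ s, G i x⟩ : Ops (ZMod p)) ∈ C := by
    intro ι _ s G
    induction s using Finset.induction_on with
    | empty => intro _; exact mem_congr (hconst m 0) (fun x => by simp)
    | @insert j s hj ih =>
      intro hG
      refine mem_congr (addC hC hplus (hG j (by simp))
        (ih (fun i hi => hG i (by simp [hi])))) (fun x => ?_)
      rw [Finset.sum_insert hj]
  have hprodfac : ∀ (a : Fin (m+1) → ZMod p) (s : Finset (Fin (m+1))),
      (⟨m, fun x => ∏ i ∈ s, (1 - (x i - a i)^(p-1))⟩ : Ops (ZMod p)) ∈ C := by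
    intro a s
    induction s using Finset.induction_on with
    | empty => exact mem_congr (hconst m 1) (fun x => by simp)
    | @insert j s hj ih =>
      have hxj : (⟨m, fun x => x j - a j⟩ : Ops (ZMod p)) ∈ C :=
        mem_congr (addC hC hplus (hC.1 m j) (hconst m (-(a j)))) (fun x => by ring)
      have hpow : ∀ k : ℕ, (⟨m, fun x => (x j - a j)^k⟩ : Ops (ZMod p)) ∈ C := by
        intro k
        induction k with
        | zero => exact mem_congr (hconst m 1) (fun x => by simp)
        | succ k ihk => exact mem_congr (hmul2 ihk hxj) (fun x => by rw [pow_succ])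
      have hfacj : (⟨m, fun x => 1 - (x j - a j)^(p-1)⟩ : Ops (ZMod p)) ∈ C :=
        mem_congr (addC hC hplus (hconst m 1) (scaleC hC hplus (-1) (hpow (p-1))))
          (fun x => by ring)
      exact mem_congr (hmul2 hfacj ih) (fun x => by rw [Finset.prod_insert hj])
  have key : ∀ x, f x = ∑ a : Fin (m+1) → ZMod p,
      f a * ∏ i, (1 - (x i - a i)^(p-1)) := by
    intro x
    have hp1 : p - 1 ≠ 0 := Nat.sub_ne_zero_of_lt (Fact.out : p.Prime).one_lt
    have hprod : ∀ a : Fin (m+1) → ZMod p,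
        (∏ i, (1 - (x i - a i)^(p-1))) = if a = x then 1 else 0 := by
      intro a
      by_cases hax : a = x
      · subst hax
        simp [sub_self, zero_pow hp1]
      · obtain ⟨i, hi⟩ := Function.ne_iff.mp hax
        rw [if_neg hax]
        apply Finset.prod_eq_zero (Finset.mem_univ i)
        rw [ZMod.pow_card_sub_one_eq_one (sub_ne_zero.mpr (Ne.symm hi))]
        ring
    rw [Finset.sum_congr rfl (fun a _ => by rw [hprod a])]
    simp
  refine mem_congr (hsum Finset.univ
    (fun a => fun x => f a * ∏ i, (1 - (x i - a i)^(p-1))) ?_) (fun x => (key x).symm)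
  intro a _
  exact scaleC hC hplus (f a) (hprodfac a Finset.univ)

end Statement16Proof6
/-- Let `C` be a clone on `ZMod p` containing `+`, not contained in the
affine operations, and containing some operation that does not preserve `{0}`. Then `C`
contains all finitary operations on `ZMod p`. -/
theorem statement16 (p : ℕ) (hp : p.Prime) (C : Set (Ops (ZMod p)))
    (hC : IsClone C) (hplus : plusOp (ZMod p) ∈ C) (haff : ¬ C ⊆ AffOps p)
    (h0 : ∃ h ∈ C, ¬ Preserves0 h) :
    C = Set.univ := by
  haveI : Fact p.Prime := ⟨hp⟩
  obtain ⟨h0op, h0C, h0np⟩ := h0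
  obtain ⟨n0, F0⟩ := h0op
  have hF0 : F0 (fun _ => 0) ≠ 0 := h0np
  have hconst : ∀ (m : ℕ) (b : ZMod p), (⟨m, fun _ => b⟩ : Ops (ZMod p)) ∈ C :=
    fun m b => constC hC hplus h0C hF0 m b
  have hmul := mulC hC hplus hconst haff
  ext g
  simp only [Set.mem_univ, iff_true]
  obtain ⟨m, f⟩ := g
  exact allOps hC hplus hconst hmul m f
end
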